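/- arXiv:1702.00781 — 2 statements merged into one kernel-verified Lean document; each statement's English description precedes it below -/
import Mathlib

section
/- Suppose there exist an integer n ≥ 1 and a nonempty antichain A ⊆ 2^[n] with ∅ ∉ A such that U = 2^[n] \ D[A] is nonempty, sdepth(U) ≤ sdepth(D[A]), and A splits. Then there exist an integer n' ≤ n and a nonempty antichain B ⊆ 2^[n'] with ∅ ∉ B such that U' = 2^[n'] \ D[B] is nonempty, sdepth(U') ≤ sdepth(D[B]), and B does not split. -/
open Finset

/-- An interval partition of a family `Q` of subsets of `[n]` (identified with `Fin n`):
a finite collection of nonempty intervals `[A,B]`, each contained in `Q`, pairwise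
disjoint, and covering `Q`. -/
structure IntervalPartition (n : ℕ) (Q : Finset (Finset (Fin n))) where
  pairs : Finset (Finset (Fin n) × Finset (Fin n))
  le : ∀ p ∈ pairs, p.1 ⊆ p.2
  sub : ∀ p ∈ pairs, Finset.Icc p.1 p.2 ⊆ Q
  disj : ∀ p ∈ pairs, ∀ q ∈ pairs, p ≠ q →
    Disjoint (Finset.Icc p.1 p.2) (Finset.Icc q.1 q.2)
  covers : ∀ C ∈ Q, ∃ p ∈ pairs, C ∈ Finset.Icc p.1 p.2

/-- The Stanley depth of a family `Q`: the largest `k` such that some interval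
partition of `Q` has every interval's maximal element of size at least `k`. -/
noncomputable def sdepth {n : ℕ} (Q : Finset (Finset (Fin n))) : ℕ :=
  sSup {k | ∃ P : IntervalPartition n Q, ∀ p ∈ P.pairs, k ≤ p.2.card}

/-- `D` is a down set in `2^[n]`. -/
def IsDownSet {n : ℕ} (D : Finset (Finset (Fin n))) : Prop :=
  ∀ B ∈ D, ∀ A, A ⊆ B → A ∈ D

/-- `B` is a maximal element of the family `D`. -/
def MaxElt {n : ℕ} (D : Finset (Finset (Fin n))) (B : Finset (Fin n)) : Prop :=
  B ∈ D ∧ ∀ C ∈ D, B ⊆ C → B = C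

/-- The closed down set `D[A]` of a family `A ⊆ 2^[n]`. -/
def downOf {n : ℕ} (A : Finset (Finset (Fin n))) : Finset (Finset (Fin n)) :=
  Finset.univ.filter (fun C => ∃ a ∈ A, C ⊆ a)

/-- `A` is an antichain in `2^[n]`. -/
def IsAntichainSets {n : ℕ} (A : Finset (Finset (Fin n))) : Prop :=
  ∀ a ∈ A, ∀ b ∈ A, a ⊆ b → a = b

/-- The antichain `A` splits over `x`: (i) for every `S ∈ A'_x = {A \ {x} : A ∈ A, x ∈ A}`
there is `T ∈ A` with `x ∉ T` and `S ⊆ T`; and (ii)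
`sdepth(D[A \ A_x]) ≥ sdepth(D[A])`. -/
def SplitsOver {n : ℕ} (A : Finset (Finset (Fin n))) (x : Fin n) : Prop :=
  (∀ S ∈ A, x ∈ S → ∃ T ∈ A, x ∉ T ∧ S.erase x ⊆ T) ∧
  sdepth (downOf A) ≤ sdepth (downOf (A.filter (fun a => x ∉ a)))

/-- The antichain `A` splits if it splits over some `x ∈ [n]`. -/
def Splits {n : ℕ} (A : Finset (Finset (Fin n))) : Prop := ∃ x : Fin n, SplitsOver A x

namespace SDHelp

open Finset

variable {n : ℕ}

/-- The set whose sSup is sdepth. -/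
def sdSet (Q : Finset (Finset (Fin n))) : Set ℕ :=
  {k | ∃ P : IntervalPartition n Q, ∀ p ∈ P.pairs, k ≤ p.2.card}

lemma sdepth_eq (Q : Finset (Finset (Fin n))) : sdepth Q = sSup (sdSet Q) := rfl

/-- Singleton partition. -/
def singlePart (Q : Finset (Finset (Fin n))) : IntervalPartition n Q where
  pairs := Q.image (fun C => (C, C))
  le := by intro p hp; simp only [mem_image] at hp; obtain ⟨C, _, rfl⟩ := hp; exact Subset.rfl
  sub := by
    intro p hp; simp only [mem_image] at hp; obtain ⟨C, hC, rfl⟩ := hp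
    intro D hD; rw [Finset.Icc_self, mem_singleton] at hD; subst hD; exact hC
  disj := by
    intro p hp q hq hpq
    simp only [mem_image] at hp hq
    obtain ⟨C, _, rfl⟩ := hp; obtain ⟨D, _, rfl⟩ := hq
    show Disjoint (Finset.Icc C C) (Finset.Icc D D)
    rw [Finset.Icc_self, Finset.Icc_self, Finset.disjoint_singleton]
    intro h; exact hpq (by rw [h])
  covers := by
    intro C hC
    exact ⟨(C, C), mem_image_of_mem _ hC, by rw [Finset.Icc_self]; exact mem_singleton_self C⟩

lemma zero_mem_sdSet (Q : Finset (Finset (Fin n))) : 0 ∈ sdSet Q :=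
  ⟨singlePart Q, fun _ _ => Nat.zero_le _⟩

lemma sdSet_nonempty (Q : Finset (Finset (Fin n))) : (sdSet Q).Nonempty :=
  ⟨0, zero_mem_sdSet Q⟩

lemma sdSet_bddAbove (Q : Finset (Finset (Fin n))) (hQ : Q.Nonempty) :
    BddAbove (sdSet Q) := by
  refine ⟨n, ?_⟩
  rintro k ⟨P, hP⟩
  obtain ⟨C, hC⟩ := hQ
  obtain ⟨p, hp, hCp⟩ := P.covers C hC
  calc k ≤ p.2.card := hP p hp
    _ ≤ (Finset.univ : Finset (Fin n)).card := card_le_card (subset_univ _)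
    _ = n := by simp

lemma le_sdepth (Q : Finset (Finset (Fin n))) (hQ : Q.Nonempty) (k : ℕ)
    (h : ∃ P : IntervalPartition n Q, ∀ p ∈ P.pairs, k ≤ p.2.card) :
    k ≤ sdepth Q :=
  le_csSup (sdSet_bddAbove Q hQ) h

lemma sdepth_spec (Q : Finset (Finset (Fin n))) (hQ : Q.Nonempty) :
    ∃ P : IntervalPartition n Q, ∀ p ∈ P.pairs, sdepth Q ≤ p.2.card :=
  Nat.sSup_mem (sdSet_nonempty Q) (sdSet_bddAbove Q hQ)

end SDHelp
namespace SDHelp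
open Finset

variable {n : ℕ} (x : Fin (n + 1))

/-- Embedding `Fin n ↪ Fin (n+1)` missing `x`. -/
def emb : Fin n ↪ Fin (n + 1) := ⟨x.succAbove, Fin.succAbove_right_injective⟩

def push (S : Finset (Fin n)) : Finset (Fin (n + 1)) := S.map (emb x)

noncomputable def pre (C : Finset (Fin (n + 1))) : Finset (Fin n) :=
  C.preimage x.succAbove (Function.Injective.injOn Fin.succAbove_right_injective)

lemma mem_push {S : Finset (Fin n)} {y : Fin (n + 1)} :
    y ∈ push x S ↔ ∃ a ∈ S, x.succAbove a = y := by
  simp [push, emb, Finset.mem_map]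

lemma mem_pre {C : Finset (Fin (n + 1))} {a : Fin n} :
    a ∈ pre x C ↔ x.succAbove a ∈ C := by
  simp [pre, Finset.mem_preimage]

lemma x_not_mem_push (S : Finset (Fin n)) : x ∉ push x S := by
  rw [mem_push]; rintro ⟨a, _, ha⟩; exact Fin.succAbove_ne x a ha

lemma pre_push (S : Finset (Fin n)) : pre x (push x S) = S := by
  ext a; rw [mem_pre, mem_push]
  constructor
  · rintro ⟨b, hb, hba⟩; rwa [Fin.succAbove_right_injective hba] at hb
  · intro h; exact ⟨a, h, rfl⟩

lemma push_pre {C : Finset (Fin (n + 1))} (hC : x ∉ C) : push x (pre x C) = C := by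
  ext y; rw [mem_push]
  constructor
  · rintro ⟨a, ha, rfl⟩; rwa [mem_pre] at ha
  · intro hy
    have hyx : y ≠ x := fun h => hC (h ▸ hy)
    obtain ⟨a, ha⟩ := Fin.exists_succAbove_eq hyx
    exact ⟨a, by rw [mem_pre, ha]; exact hy, ha⟩

lemma push_subset_push {S T : Finset (Fin n)} : push x S ⊆ push x T ↔ S ⊆ T :=
  Finset.map_subset_map

lemma push_mono {S T : Finset (Fin n)} (h : S ⊆ T) : push x S ⊆ push x T :=
  (push_subset_push x).2 h

lemma pre_mono {C D : Finset (Fin (n + 1))} (h : C ⊆ D) : pre x C ⊆ pre x D := by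
  intro a ha; rw [mem_pre] at ha ⊢; exact h ha

lemma card_push (S : Finset (Fin n)) : (push x S).card = S.card := Finset.card_map _

lemma card_pre {C : Finset (Fin (n + 1))} (hC : x ∉ C) : (pre x C).card = C.card := by
  conv_rhs => rw [← push_pre x hC]
  rw [card_push]

lemma push_empty : push x ∅ = ∅ := rfl

lemma pre_eq_empty {C : Finset (Fin (n + 1))} (hC : x ∉ C) (h : pre x C = ∅) : C = ∅ := by
  rw [← push_pre x hC, h, push_empty]

/-- Icc of pushes is the push-image of Icc. -/
lemma Icc_push (S T : Finset (Fin n)) :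
    Finset.Icc (push x S) (push x T) = (Finset.Icc S T).image (push x) := by
  ext C
  rw [Finset.mem_Icc, Finset.mem_image]
  constructor
  · rintro ⟨h1, h2⟩
    have hxC : x ∉ C := fun h => x_not_mem_push x T (h2 h)
    refine ⟨pre x C, ?_, push_pre x hxC⟩
    rw [Finset.mem_Icc]
    constructor
    · have := pre_mono x (show push x S ⊆ C from h1); rwa [pre_push] at this
    · have := pre_mono x (show C ⊆ push x T from h2); rwa [pre_push] at this
  · rintro ⟨Z, hZ, rfl⟩
    rw [Finset.mem_Icc] at hZ
    exact ⟨push_mono x hZ.1, push_mono x hZ.2⟩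

def familyPush (H : Finset (Finset (Fin n))) : Finset (Finset (Fin (n + 1))) :=
  H.image (push x)

noncomputable def familyPull (G : Finset (Finset (Fin (n + 1)))) : Finset (Finset (Fin n)) :=
  G.image (pre x)

lemma mem_familyPush {H : Finset (Finset (Fin n))} {C : Finset (Fin (n + 1))} :
    C ∈ familyPush x H ↔ ∃ S ∈ H, push x S = C := by
  simp [familyPush]

lemma mem_familyPull {G : Finset (Finset (Fin (n + 1)))}
    (hG : ∀ C ∈ G, x ∉ C) {S : Finset (Fin n)} :
    S ∈ familyPull x G ↔ push x S ∈ G := by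
  simp only [familyPull, Finset.mem_image]
  constructor
  · rintro ⟨C, hC, rfl⟩; rwa [push_pre x (hG C hC)]
  · intro h; exact ⟨push x S, h, pre_push x S⟩

lemma familyPush_pull {G : Finset (Finset (Fin (n + 1)))} (hG : ∀ C ∈ G, x ∉ C) :
    familyPush x (familyPull x G) = G := by
  ext C
  rw [mem_familyPush]
  constructor
  · rintro ⟨S, hS, rfl⟩
    rwa [mem_familyPull x hG] at hS
  · intro hC
    exact ⟨pre x C, by rw [mem_familyPull x hG, push_pre x (hG C hC)]; exact hC,
      push_pre x (hG C hC)⟩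

lemma familyPull_nonempty {G : Finset (Finset (Fin (n + 1)))} (hG : G.Nonempty) :
    (familyPull x G).Nonempty := hG.image _

end SDHelp
namespace SDHelp
open Finset

variable {n : ℕ} (x : Fin (n + 1))

/-- Push an interval partition up. -/
def pushPart {H : Finset (Finset (Fin n))} (P : IntervalPartition n H) :
    IntervalPartition (n + 1) (familyPush x H) where
  pairs := P.pairs.image (fun p => (push x p.1, push x p.2))
  le := by
    rintro p hp
    simp only [Finset.mem_image] at hp
    obtain ⟨q, hq, rfl⟩ := hp
    exact push_mono x (P.le q hq)
  sub := by
    rintro p hp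
    simp only [Finset.mem_image] at hp
    obtain ⟨q, hq, rfl⟩ := hp
    show Finset.Icc (push x q.1) (push x q.2) ⊆ _
    rw [Icc_push]
    intro C hC
    rw [Finset.mem_image] at hC
    obtain ⟨Z, hZ, rfl⟩ := hC
    rw [mem_familyPush]
    exact ⟨Z, P.sub q hq hZ, rfl⟩
  disj := by
    rintro p hp q hq hpq
    simp only [Finset.mem_image] at hp hq
    obtain ⟨p₀, hp₀, rfl⟩ := hp
    obtain ⟨q₀, hq₀, rfl⟩ := hq
    have hne : p₀ ≠ q₀ := fun h => hpq (by rw [h])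
    have := P.disj p₀ hp₀ q₀ hq₀ hne
    show Disjoint (Finset.Icc (push x p₀.1) (push x p₀.2)) _
    rw [Finset.disjoint_left] at this ⊢
    intro C hC hC'
    rw [Icc_push, Finset.mem_image] at hC hC'
    obtain ⟨Z, hZ, rfl⟩ := hC
    obtain ⟨W, hW, hWe⟩ := hC'
    have : W = Z := Finset.map_injective (emb x) hWe
    subst this
    exact (Finset.disjoint_left.1 (P.disj p₀ hp₀ q₀ hq₀ hne)) hZ hW
  covers := by
    intro C hC
    rw [mem_familyPush] at hC
    obtain ⟨S, hS, rfl⟩ := hC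
    obtain ⟨p, hp, hSp⟩ := P.covers S hS
    refine ⟨(push x p.1, push x p.2), Finset.mem_image_of_mem _ hp, ?_⟩
    show push x S ∈ Finset.Icc (push x p.1) (push x p.2)
    rw [Icc_push, Finset.mem_image]
    exact ⟨S, hSp, rfl⟩

/-- Pull an interval partition down. -/
noncomputable def pullPart {H : Finset (Finset (Fin n))}
    (Q : IntervalPartition (n + 1) (familyPush x H)) :
    IntervalPartition n H where
  pairs := Q.pairs.image (fun p => (pre x p.1, pre x p.2))
  le := by
    rintro p hp
    simp only [Finset.mem_image] at hp
    obtain ⟨q, hq, rfl⟩ := hp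
    exact pre_mono x (Q.le q hq)
  sub := by
    rintro p hp
    simp only [Finset.mem_image] at hp
    obtain ⟨q, hq, rfl⟩ := hp
    intro Z hZ
    rw [Finset.mem_Icc] at hZ
    -- push x Z ∈ Icc q.1 q.2
    have hq2 : q.2 ∈ familyPush x H := Q.sub q hq (by
      rw [Finset.mem_Icc]; exact ⟨Q.le q hq, Finset.Subset.rfl⟩)
    rw [mem_familyPush] at hq2
    obtain ⟨T, _, hT⟩ := hq2
    have hxq2 : x ∉ q.2 := hT ▸ x_not_mem_push x T
    have hxq1 : x ∉ q.1 := fun h => hxq2 (Q.le q hq h)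
    have h1 : q.1 ⊆ push x Z := by
      rw [← push_pre x hxq1]; exact push_mono x hZ.1
    have h2 : push x Z ⊆ q.2 := by
      rw [← push_pre x hxq2]; exact push_mono x hZ.2
    have : push x Z ∈ familyPush x H := Q.sub q hq (by rw [Finset.mem_Icc]; exact ⟨h1, h2⟩)
    rw [mem_familyPush] at this
    obtain ⟨S, hS, hSe⟩ := this
    have : S = Z := Finset.map_injective (emb x) hSe
    exact this ▸ hS
  disj := by
    rintro p hp q hq hpq
    simp only [Finset.mem_image] at hp hq
    obtain ⟨p₀, hp₀, rfl⟩ := hp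
    obtain ⟨q₀, hq₀, rfl⟩ := hq
    have hne : p₀ ≠ q₀ := fun h => hpq (by rw [h])
    rw [Finset.disjoint_left]
    intro Z hZ hZ'
    -- lift membership
    have key : ∀ r ∈ Q.pairs, Z ∈ Finset.Icc (pre x r.1) (pre x r.2) →
        push x Z ∈ Finset.Icc r.1 r.2 := by
      intro r hr hZr
      rw [Finset.mem_Icc] at hZr ⊢
      have hr2 : r.2 ∈ familyPush x H := Q.sub r hr (by
        rw [Finset.mem_Icc]; exact ⟨Q.le r hr, Finset.Subset.rfl⟩)
      rw [mem_familyPush] at hr2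
      obtain ⟨T, _, hT⟩ := hr2
      have hxr2 : x ∉ r.2 := hT ▸ x_not_mem_push x T
      have hxr1 : x ∉ r.1 := fun h => hxr2 (Q.le r hr h)
      constructor
      · rw [← push_pre x hxr1]; exact push_mono x hZr.1
      · rw [← push_pre x hxr2]; exact push_mono x hZr.2
    exact (Finset.disjoint_left.1 (Q.disj p₀ hp₀ q₀ hq₀ hne))
      (key p₀ hp₀ hZ) (key q₀ hq₀ hZ')
  covers := by
    intro S hS
    have : push x S ∈ familyPush x H := by rw [mem_familyPush]; exact ⟨S, hS, rfl⟩
    obtain ⟨p, hp, hSp⟩ := Q.covers _ this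
    refine ⟨(pre x p.1, pre x p.2), Finset.mem_image_of_mem _ hp, ?_⟩
    rw [Finset.mem_Icc] at hSp ⊢
    constructor
    · have := pre_mono x hSp.1; rwa [pre_push] at this
    · have := pre_mono x hSp.2; rwa [pre_push] at this

lemma sdepth_familyPush (H : Finset (Finset (Fin n))) :
    sdepth (familyPush x H) = sdepth H := by
  have hset : sdSet (familyPush x H) = sdSet H := by
    ext k
    constructor
    · rintro ⟨Q, hQ⟩
      refine ⟨pullPart x Q, ?_⟩
      rintro p hp
      simp only [pullPart, Finset.mem_image] at hp
      obtain ⟨q, hq, rfl⟩ := hp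
      have hr2 : q.2 ∈ familyPush x H := Q.sub q hq (by
        rw [Finset.mem_Icc]; exact ⟨Q.le q hq, Finset.Subset.rfl⟩)
      rw [mem_familyPush] at hr2
      obtain ⟨T, _, hT⟩ := hr2
      have hxq2 : x ∉ q.2 := hT ▸ x_not_mem_push x T
      rw [card_pre x hxq2]
      exact hQ q hq
    · rintro ⟨P, hP⟩
      refine ⟨pushPart x P, ?_⟩
      rintro p hp
      simp only [pushPart, Finset.mem_image] at hp
      obtain ⟨q, hq, rfl⟩ := hp
      rw [card_push]
      exact hP q hq
  rw [sdepth_eq, sdepth_eq, hset]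

lemma sdepth_xfree {G : Finset (Finset (Fin (n + 1)))} (hG : ∀ C ∈ G, x ∉ C) :
    sdepth (familyPull x G) = sdepth G := by
  conv_rhs => rw [← familyPush_pull x hG]
  rw [sdepth_familyPush]

end SDHelp
namespace SDHelp
open Finset

variable {n : ℕ}

lemma mem_downOf {A : Finset (Finset (Fin n))} {C : Finset (Fin n)} :
    C ∈ downOf A ↔ ∃ a ∈ A, C ⊆ a := by
  simp [downOf]

/-- counterexample predicate -/
def IsCex (n : ℕ) (B : Finset (Finset (Fin n))) : Prop :=
  IsAntichainSets B ∧ B.Nonempty ∧ ∅ ∉ B ∧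
  ((Finset.univ : Finset (Finset (Fin n))) \ downOf B).Nonempty ∧
  sdepth ((Finset.univ : Finset (Finset (Fin n))) \ downOf B) ≤ sdepth (downOf B)

variable (x : Fin (n + 1))

def xfreeCube : Finset (Finset (Fin (n + 1))) :=
  Finset.univ.filter (fun C => x ∉ C)

lemma mem_xfreeCube {C : Finset (Fin (n + 1))} : C ∈ xfreeCube x ↔ x ∉ C := by
  simp [xfreeCube]

lemma downOf_xfree {𝒜 : Finset (Finset (Fin (n + 1)))} (h𝒜 : ∀ a ∈ 𝒜, x ∉ a) :
    ∀ C ∈ downOf 𝒜, x ∉ C := by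
  intro C hC hx
  rw [mem_downOf] at hC
  obtain ⟨a, ha, hCa⟩ := hC
  exact h𝒜 a ha (hCa hx)

lemma downOf_pull {𝒜 : Finset (Finset (Fin (n + 1)))} (h𝒜 : ∀ a ∈ 𝒜, x ∉ a) :
    downOf (familyPull x 𝒜) = familyPull x (downOf 𝒜) := by
  ext S
  rw [mem_downOf, mem_familyPull x (downOf_xfree x h𝒜), mem_downOf]
  constructor
  · rintro ⟨a', ha', hSa⟩
    simp only [familyPull, Finset.mem_image] at ha'
    obtain ⟨a, ha, rfl⟩ := ha'
    refine ⟨a, ha, ?_⟩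
    have := push_mono x hSa
    rwa [push_pre x (h𝒜 a ha)] at this
  · rintro ⟨a, ha, hSa⟩
    refine ⟨pre x a, ?_, ?_⟩
    · simp only [familyPull, Finset.mem_image]; exact ⟨a, ha, rfl⟩
    · have := pre_mono x hSa; rwa [pre_push] at this

lemma compl_pull {𝒜 : Finset (Finset (Fin (n + 1)))} (h𝒜 : ∀ a ∈ 𝒜, x ∉ a) :
    (Finset.univ : Finset (Finset (Fin n))) \ downOf (familyPull x 𝒜) =
      familyPull x (xfreeCube x \ downOf 𝒜) := by
  have hxf : ∀ C ∈ xfreeCube x \ downOf 𝒜, x ∉ C := by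
    intro C hC
    rw [Finset.mem_sdiff, mem_xfreeCube] at hC
    exact hC.1
  ext S
  rw [Finset.mem_sdiff, mem_familyPull x hxf, Finset.mem_sdiff, mem_xfreeCube,
    downOf_pull x h𝒜, mem_familyPull x (downOf_xfree x h𝒜)]
  constructor
  · rintro ⟨-, h⟩; exact ⟨x_not_mem_push x S, h⟩
  · rintro ⟨-, h⟩; exact ⟨Finset.mem_univ S, h⟩

/-- Pulling an x-free "relative counterexample" down one dimension. -/
lemma pull_cex {𝒜 : Finset (Finset (Fin (n + 1)))} (h𝒜 : ∀ a ∈ 𝒜, x ∉ a)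
    (hanti : IsAntichainSets 𝒜) (hne : 𝒜.Nonempty) (h0 : ∅ ∉ 𝒜)
    (hU : (xfreeCube x \ downOf 𝒜).Nonempty)
    (hle : sdepth (xfreeCube x \ downOf 𝒜) ≤ sdepth (downOf 𝒜)) :
    IsCex n (familyPull x 𝒜) := by
  refine ⟨?_, familyPull_nonempty x hne, ?_, ?_, ?_⟩
  · intro a' ha' b' hb' hab
    rw [mem_familyPull x h𝒜] at ha' hb'
    have := hanti _ ha' _ hb' (push_mono x hab)
    have h2 : pre x (push x a') = pre x (push x b') := by rw [this]
    rwa [pre_push, pre_push] at h2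
  · intro h
    rw [mem_familyPull x h𝒜, push_empty] at h
    exact h0 h
  · rw [compl_pull x h𝒜]
    exact familyPull_nonempty x hU
  · rw [compl_pull x h𝒜, downOf_pull x h𝒜,
      sdepth_xfree x (downOf_xfree x h𝒜),
      sdepth_xfree x (fun C hC => by
        rw [Finset.mem_sdiff, mem_xfreeCube] at hC; exact hC.1)]
    exact hle

end SDHelp
namespace SDHelp
open Finset

variable {n : ℕ} (x : Fin (n + 1)) (B : Finset (Finset (Fin (n + 1))))

/-- The down set generated by the x-shadows of members of `B` containing `x`. -/
def Efam : Finset (Finset (Fin (n + 1))) :=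
  Finset.univ.filter (fun C => ∃ b ∈ B, x ∈ b ∧ C ⊆ b.erase x)

lemma mem_Efam {C : Finset (Fin (n + 1))} :
    C ∈ Efam x B ↔ ∃ b ∈ B, x ∈ b ∧ C ⊆ b.erase x := by
  simp [Efam]

lemma Efam_xfree : ∀ C ∈ Efam x B, x ∉ C := by
  intro C hC hx
  rw [mem_Efam] at hC
  obtain ⟨b, _, _, hCb⟩ := hC
  exact (Finset.notMem_erase x b) (hCb hx)

lemma Efam_downset {C C' : Finset (Fin (n + 1))} (hC : C ∈ Efam x B) (h : C' ⊆ C) :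
    C' ∈ Efam x B := by
  rw [mem_Efam] at hC ⊢
  obtain ⟨b, hb, hxb, hCb⟩ := hC
  exact ⟨b, hb, hxb, h.trans hCb⟩

/-- K2: x-containing members of `downOf B` correspond to `Efam`. -/
lemma mem_downOf_of_xmem {C : Finset (Fin (n + 1))} (hxC : x ∈ C) :
    C ∈ downOf B ↔ C.erase x ∈ Efam x B := by
  rw [mem_downOf, mem_Efam]
  constructor
  · rintro ⟨b, hb, hCb⟩
    exact ⟨b, hb, hCb hxC, Finset.erase_subset_erase x hCb⟩
  · rintro ⟨b, hb, hxb, hCb⟩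
    refine ⟨b, hb, ?_⟩
    have h1 : C ⊆ insert x (C.erase x) := by rw [Finset.insert_erase hxC]
    have h2 : insert x (C.erase x) ⊆ insert x (b.erase x) := Finset.insert_subset_insert x hCb
    rw [Finset.insert_erase hxb] at h2
    exact h1.trans h2

/-- K1: x-free members of `downOf B` lie in `downOf B'` (needs splitting cond (i)). -/
lemma mem_downOf_of_xfree
    (hsp1 : ∀ S ∈ B, x ∈ S → ∃ T ∈ B, x ∉ T ∧ S.erase x ⊆ T)
    {C : Finset (Fin (n + 1))} (hxC : x ∉ C) :
    C ∈ downOf B ↔ C ∈ downOf (B.filter (fun a => x ∉ a)) := by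
  rw [mem_downOf, mem_downOf]
  constructor
  · rintro ⟨b, hb, hCb⟩
    by_cases hxb : x ∈ b
    · obtain ⟨T, hT, hxT, hbT⟩ := hsp1 b hb hxb
      refine ⟨T, Finset.mem_filter.2 ⟨hT, hxT⟩, ?_⟩
      refine (Finset.subset_erase.2 ⟨hCb, hxC⟩).trans hbT
    · exact ⟨b, Finset.mem_filter.2 ⟨hb, hxb⟩, hCb⟩
  · rintro ⟨b, hb, hCb⟩
    exact ⟨b, (Finset.mem_filter.1 hb).1, hCb⟩

/-- Membership in an `insert x`-lifted interval. -/
lemma mem_Icc_insert {X Y C : Finset (Fin (n + 1))} (hxY : x ∉ Y) :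
    C ∈ Finset.Icc (insert x X) (insert x Y) ↔
      x ∈ C ∧ C.erase x ∈ Finset.Icc (X.erase x) Y := by
  rw [Finset.mem_Icc, Finset.mem_Icc]
  constructor
  · rintro ⟨h1, h2⟩
    have hxC : x ∈ C := h1 (Finset.mem_insert_self x X)
    refine ⟨hxC, ?_, ?_⟩
    · intro a ha
      rw [Finset.mem_erase] at ha ⊢
      exact ⟨ha.1, h1 (Finset.mem_insert_of_mem ha.2)⟩
    · intro a ha
      rw [Finset.mem_erase] at ha
      rcases Finset.mem_insert.1 (h2 ha.2) with h | h
      · exact absurd h ha.1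
      · exact h
  · rintro ⟨hxC, h1, h2⟩
    constructor
    · intro a ha
      rcases Finset.mem_insert.1 ha with rfl | ha
      · exact hxC
      · by_cases hax : a = x
        · exact hax ▸ hxC
        · exact Finset.erase_subset x C (h1 (Finset.mem_erase.2 ⟨hax, ha⟩))
    · intro a ha
      by_cases hax : a = x
      · exact hax ▸ Finset.mem_insert_self x Y
      · exact Finset.mem_insert_of_mem (h2 (Finset.mem_erase.2 ⟨hax, ha⟩))

/-- Membership in an `erase x`-shadowed interval. -/
lemma mem_Icc_erase {X Y C : Finset (Fin (n + 1))} (hxY : x ∈ Y) :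
    C ∈ Finset.Icc (X.erase x) (Y.erase x) ↔
      x ∉ C ∧ insert x C ∈ Finset.Icc (X ∪ {x}) Y := by
  rw [Finset.mem_Icc, Finset.mem_Icc]
  constructor
  · rintro ⟨h1, h2⟩
    have hxC : x ∉ C := fun h => Finset.notMem_erase x Y (h2 h)
    refine ⟨hxC, ?_, ?_⟩
    · intro a ha
      rcases Finset.mem_union.1 ha with ha | ha
      · by_cases hax : a = x
        · exact hax ▸ Finset.mem_insert_self x C
        · exact Finset.mem_insert_of_mem (h1 (Finset.mem_erase.2 ⟨hax, ha⟩))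
      · rw [Finset.mem_singleton] at ha
        exact ha ▸ Finset.mem_insert_self x C
    · intro a ha
      rcases Finset.mem_insert.1 ha with rfl | ha
      · exact hxY
      · exact Finset.erase_subset x Y (h2 ha)
  · rintro ⟨hxC, h1, h2⟩
    constructor
    · intro a ha
      rw [Finset.mem_erase] at ha
      have : a ∈ insert x C := h1 (Finset.mem_union_left _ ha.2)
      rcases Finset.mem_insert.1 this with h | h
      · exact absurd h ha.1
      · exact h
    · intro a ha
      rw [Finset.mem_erase]
      refine ⟨fun h => hxC (h ▸ ha), h2 (Finset.mem_insert_of_mem ha)⟩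

/-- FACT 1: sdepth of `Efam` is at least `sdepth (downOf B) - 1`, via shadow surgery. -/
lemma sdepth_Efam_ge
    (hDBne : (downOf B).Nonempty) (hEne : (Efam x B).Nonempty) :
    sdepth (downOf B) ≤ sdepth (Efam x B) + 1 := by
  obtain ⟨Q, hQ⟩ := sdepth_spec (downOf B) hDBne
  set d := sdepth (downOf B) with hd
  -- shadow partition of Efam
  have keylift : ∀ p ∈ Q.pairs, x ∈ p.2 → ∀ C,
      C ∈ Finset.Icc (p.1.erase x) (p.2.erase x) →
      x ∉ C ∧ insert x C ∈ Finset.Icc p.1 p.2 := by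
    intro p hp hxp2 C hC
    rw [mem_Icc_erase x hxp2] at hC
    refine ⟨hC.1, ?_⟩
    rw [Finset.mem_Icc] at hC ⊢
    exact ⟨(Finset.subset_union_left).trans hC.2.1, hC.2.2⟩
  suffices h1 : d - 1 ≤ sdepth (Efam x B) by omega
  refine le_sdepth (Efam x B) hEne (d - 1) ?_
  refine ⟨⟨(Q.pairs.filter (fun p => x ∈ p.2)).image
    (fun p => (p.1.erase x, p.2.erase x)), ?_, ?_, ?_, ?_⟩, ?_⟩
  · rintro p hp
    simp only [Finset.mem_image, Finset.mem_filter] at hp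
    obtain ⟨q, ⟨hq, _⟩, rfl⟩ := hp
    exact Finset.erase_subset_erase x (Q.le q hq)
  · rintro p hp
    simp only [Finset.mem_image, Finset.mem_filter] at hp
    obtain ⟨q, ⟨hq, hxq⟩, rfl⟩ := hp
    intro C hC
    obtain ⟨hxC, hins⟩ := keylift q hq hxq C hC
    have : insert x C ∈ downOf B := Q.sub q hq hins
    rw [mem_downOf_of_xmem x B (Finset.mem_insert_self x C)] at this
    rwa [Finset.erase_insert hxC] at this
  · rintro p hp q hq hpq
    simp only [Finset.mem_image, Finset.mem_filter] at hp hq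
    obtain ⟨p₀, ⟨hp₀, hxp₀⟩, rfl⟩ := hp
    obtain ⟨q₀, ⟨hq₀, hxq₀⟩, rfl⟩ := hq
    have hne : p₀ ≠ q₀ := fun h => hpq (by rw [h])
    rw [Finset.disjoint_left]
    intro C hC hC'
    obtain ⟨_, h1⟩ := keylift p₀ hp₀ hxp₀ C hC
    obtain ⟨_, h2⟩ := keylift q₀ hq₀ hxq₀ C hC'
    exact (Finset.disjoint_left.1 (Q.disj p₀ hp₀ q₀ hq₀ hne)) h1 h2
  · intro S hS
    have hxS : x ∉ S := Efam_xfree x B S hS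
    have : insert x S ∈ downOf B := by
      rw [mem_downOf_of_xmem x B (Finset.mem_insert_self x S), Finset.erase_insert hxS]
      exact hS
    obtain ⟨p, hp, hSp⟩ := Q.covers _ this
    rw [Finset.mem_Icc] at hSp
    have hxp2 : x ∈ p.2 := hSp.2 (Finset.mem_insert_self x S)
    refine ⟨(p.1.erase x, p.2.erase x), ?_, ?_⟩
    · exact Finset.mem_image_of_mem _ (Finset.mem_filter.2 ⟨hp, hxp2⟩)
    · show S ∈ Finset.Icc (p.1.erase x) (p.2.erase x)
      rw [mem_Icc_erase x hxp2]
      refine ⟨hxS, ?_⟩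
      rw [Finset.mem_Icc]
      constructor
      · intro a ha
        rcases Finset.mem_union.1 ha with ha | ha
        · exact hSp.1 ha
        · rw [Finset.mem_singleton] at ha; exact ha ▸ Finset.mem_insert_self x S
      · exact hSp.2
  · rintro p hp
    simp only [Finset.mem_image, Finset.mem_filter] at hp
    obtain ⟨q, ⟨hq, hxq⟩, rfl⟩ := hp
    have := hQ q hq
    have hcard : (q.2.erase x).card = q.2.card - 1 := Finset.card_erase_of_mem hxq
    show d - 1 ≤ (q.2.erase x).card
    omega

end SDHelp
namespace SDHelp
open Finset

variable {n : ℕ} (x : Fin (n + 1)) (B : Finset (Finset (Fin (n + 1))))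

def F1fam : Finset (Finset (Fin (n + 1))) :=
  xfreeCube x \ downOf (B.filter (fun a => x ∉ a))

def F2fam : Finset (Finset (Fin (n + 1))) := xfreeCube x \ Efam x B

lemma mem_F1fam {C : Finset (Fin (n + 1))} :
    C ∈ F1fam x B ↔ x ∉ C ∧ C ∉ downOf (B.filter (fun a => x ∉ a)) := by
  rw [F1fam, Finset.mem_sdiff, mem_xfreeCube]

lemma mem_F2fam {C : Finset (Fin (n + 1))} :
    C ∈ F2fam x B ↔ x ∉ C ∧ C ∉ Efam x B := by
  rw [F2fam, Finset.mem_sdiff, mem_xfreeCube]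

lemma assembly
    (hsp1 : ∀ S ∈ B, x ∈ S → ∃ T ∈ B, x ∉ T ∧ S.erase x ⊆ T)
    (hUne : ((Finset.univ : Finset (Finset (Fin (n + 1)))) \ downOf B).Nonempty)
    (d : ℕ)
    (R : IntervalPartition (n + 1) (F1fam x B))
    (hR : ∀ p ∈ R.pairs, d + 1 ≤ p.2.card)
    (RE : IntervalPartition (n + 1) (F2fam x B))
    (hRE : ∀ p ∈ RE.pairs, d ≤ p.2.card) :
    d + 1 ≤ sdepth ((Finset.univ : Finset (Finset (Fin (n + 1)))) \ downOf B) := by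
  have hF1U : F1fam x B ⊆ (Finset.univ : Finset (Finset (Fin (n + 1)))) \ downOf B := by
    intro C hC
    rw [mem_F1fam] at hC
    rw [Finset.mem_sdiff]
    refine ⟨Finset.mem_univ C, ?_⟩
    rw [mem_downOf_of_xfree x B hsp1 hC.1]
    exact hC.2
  -- facts about RE pairs
  have hRE2 : ∀ p ∈ RE.pairs, p.2 ∈ F2fam x B := by
    intro p hp
    exact RE.sub p hp (Finset.mem_Icc.2 ⟨RE.le p hp, Finset.Subset.rfl⟩)
  have hREx : ∀ p ∈ RE.pairs, x ∉ p.2 := by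
    intro p hp
    have := hRE2 p hp
    rw [mem_F2fam] at this
    exact this.1
  have hREx1 : ∀ p ∈ RE.pairs, x ∉ p.1 := fun p hp h => hREx p hp (RE.le p hp h)
  have hliftmem : ∀ p ∈ RE.pairs, ∀ C,
      C ∈ Finset.Icc (insert x p.1) (insert x p.2) ↔
        (x ∈ C ∧ C.erase x ∈ Finset.Icc p.1 p.2) := by
    intro p hp C
    rw [mem_Icc_insert x (hREx p hp), Finset.erase_eq_of_notMem (hREx1 p hp)]
  have hliftU : ∀ p ∈ RE.pairs, ∀ C,
      C ∈ Finset.Icc (insert x p.1) (insert x p.2) →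
        C ∈ (Finset.univ : Finset (Finset (Fin (n + 1)))) \ downOf B := by
    intro p hp C hC
    rw [hliftmem p hp] at hC
    have h2 : C.erase x ∈ F2fam x B := RE.sub p hp hC.2
    rw [mem_F2fam] at h2
    rw [Finset.mem_sdiff]
    refine ⟨Finset.mem_univ C, ?_⟩
    rw [mem_downOf_of_xmem x B hC.1]
    exact h2.2
  refine le_sdepth _ hUne (d + 1)
    ⟨⟨R.pairs ∪ RE.pairs.image (fun p => (insert x p.1, insert x p.2)), ?_, ?_, ?_, ?_⟩, ?_⟩
  · intro p hp
    rcases Finset.mem_union.1 hp with hp | hp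
    · exact R.le p hp
    · simp only [Finset.mem_image] at hp
      obtain ⟨q, hq, rfl⟩ := hp
      exact Finset.insert_subset_insert x (RE.le q hq)
  · intro p hp
    rcases Finset.mem_union.1 hp with hp | hp
    · exact fun C hC => hF1U (R.sub p hp hC)
    · simp only [Finset.mem_image] at hp
      obtain ⟨q, hq, rfl⟩ := hp
      exact fun C hC => hliftU q hq C hC
  · intro p hp q hq hpq
    rw [Finset.disjoint_left]
    intro C hCp hCq
    rcases Finset.mem_union.1 hp with hp' | hp' <;> rcases Finset.mem_union.1 hq with hq' | hq'
    · exact (Finset.disjoint_left.1 (R.disj p hp' q hq' hpq)) hCp hCq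
    · -- p in R, q lifted : C is x-free and contains x
      simp only [Finset.mem_image] at hq'
      obtain ⟨q₀, hq₀, rfl⟩ := hq'
      have h1 : C ∈ F1fam x B := R.sub p hp' hCp
      rw [mem_F1fam] at h1
      exact h1.1 (((hliftmem q₀ hq₀ C).1 hCq).1)
    · simp only [Finset.mem_image] at hp'
      obtain ⟨p₀, hp₀, rfl⟩ := hp'
      have h1 : C ∈ F1fam x B := R.sub q hq' hCq
      rw [mem_F1fam] at h1
      exact h1.1 (((hliftmem p₀ hp₀ C).1 hCp).1)
    · simp only [Finset.mem_image] at hp' hq'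
      obtain ⟨p₀, hp₀, rfl⟩ := hp'
      obtain ⟨q₀, hq₀, rfl⟩ := hq'
      have hne : p₀ ≠ q₀ := fun h => hpq (by rw [h])
      exact (Finset.disjoint_left.1 (RE.disj p₀ hp₀ q₀ hq₀ hne))
        ((hliftmem p₀ hp₀ C).1 hCp).2 ((hliftmem q₀ hq₀ C).1 hCq).2
  · intro C hC
    rw [Finset.mem_sdiff] at hC
    by_cases hxC : x ∈ C
    · have h2 : C.erase x ∈ F2fam x B := by
        rw [mem_F2fam]
        refine ⟨Finset.notMem_erase x C, ?_⟩
        intro h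
        exact hC.2 ((mem_downOf_of_xmem x B hxC).2 h)
      obtain ⟨p, hp, hCp⟩ := RE.covers _ h2
      refine ⟨(insert x p.1, insert x p.2),
        Finset.mem_union_right _ (Finset.mem_image_of_mem _ hp), ?_⟩
      rw [hliftmem p hp]
      exact ⟨hxC, hCp⟩
    · have h1 : C ∈ F1fam x B := by
        rw [mem_F1fam]
        refine ⟨hxC, ?_⟩
        intro h
        exact hC.2 ((mem_downOf_of_xfree x B hsp1 hxC).2 h)
      obtain ⟨p, hp, hCp⟩ := R.covers _ h1
      exact ⟨p, Finset.mem_union_left _ hp, hCp⟩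
  · intro p hp
    rcases Finset.mem_union.1 hp with hp | hp
    · exact hR p hp
    · simp only [Finset.mem_image] at hp
      obtain ⟨q, hq, rfl⟩ := hp
      have := hRE q hq
      have hcard : (insert x q.2).card = q.2.card + 1 :=
        Finset.card_insert_of_notMem (hREx q hq)
      show d + 1 ≤ (insert x q.2).card
      omega

end SDHelp
namespace SDHelp
open Finset

variable {n : ℕ}

lemma descent (B : Finset (Finset (Fin (n + 1)))) (x : Fin (n + 1))
    (hcex : IsCex (n + 1) B) (hsp : SplitsOver B x) :
    ∃ C : Finset (Finset (Fin n)), IsCex n C := by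
  obtain ⟨hanti, hBne, hB0, hUne, hle⟩ := hcex
  obtain ⟨hsp1, hsp2⟩ := hsp
  have hB'xf : ∀ a ∈ B.filter (fun a => x ∉ a), x ∉ a :=
    fun a ha => (Finset.mem_filter.1 ha).2
  have hB'anti : IsAntichainSets (B.filter (fun a => x ∉ a)) :=
    fun a ha b hb h =>
      hanti a (Finset.mem_filter.1 ha).1 b (Finset.mem_filter.1 hb).1 h
  have hB'0 : ∅ ∉ B.filter (fun a => x ∉ a) := fun h => hB0 (Finset.mem_filter.1 h).1
  have hB'ne : (B.filter (fun a => x ∉ a)).Nonempty := by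
    obtain ⟨b, hb⟩ := hBne
    by_cases hxb : x ∈ b
    · obtain ⟨T, hT, hxT, _⟩ := hsp1 b hb hxb
      exact ⟨T, Finset.mem_filter.2 ⟨hT, hxT⟩⟩
    · exact ⟨b, Finset.mem_filter.2 ⟨hb, hxb⟩⟩
  have hDBne : (downOf B).Nonempty := by
    obtain ⟨b, hb⟩ := hBne
    exact ⟨b, mem_downOf.2 ⟨b, hb, Finset.Subset.rfl⟩⟩
  by_cases hβ : (F1fam x B).Nonempty ∧
      sdepth (F1fam x B) ≤ sdepth (downOf (B.filter (fun a => x ∉ a)))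
  · exact ⟨familyPull x (B.filter (fun a => x ∉ a)),
      pull_cex x hB'xf hB'anti hB'ne hB'0 hβ.1 hβ.2⟩
  · -- γ case
    have hRex : ∃ R : IntervalPartition (n + 1) (F1fam x B),
        ∀ p ∈ R.pairs, sdepth (downOf B) + 1 ≤ p.2.card := by
      by_cases hF1 : (F1fam x B).Nonempty
      · have hgt : sdepth (downOf (B.filter (fun a => x ∉ a))) < sdepth (F1fam x B) :=
          lt_of_not_ge (fun h => hβ ⟨hF1, h⟩)
        obtain ⟨R, hR⟩ := sdepth_spec _ hF1
        refine ⟨R, fun p hp => le_trans (by omega) (hR p hp)⟩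
      · refine ⟨⟨∅, ?_, ?_, ?_, ?_⟩, ?_⟩
        · intro p hp; exact absurd hp (Finset.notMem_empty p)
        · intro p hp; exact absurd hp (Finset.notMem_empty p)
        · intro p hp; exact absurd hp (Finset.notMem_empty p)
        · intro C hC; exact absurd ⟨C, hC⟩ hF1
        · intro p hp; exact absurd hp (Finset.notMem_empty p)
    obtain ⟨R, hR⟩ := hRex
    have hnoRE : ¬ ∃ RE : IntervalPartition (n + 1) (F2fam x B),
        ∀ p ∈ RE.pairs, sdepth (downOf B) ≤ p.2.card := by
      rintro ⟨RE, hRE⟩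
      have := assembly x B hsp1 hUne (sdepth (downOf B)) R hR RE hRE
      omega
    have hF2ne : (F2fam x B).Nonempty := by
      by_contra h
      rw [Finset.not_nonempty_iff_eq_empty] at h
      apply hnoRE
      refine ⟨⟨∅, ?_, ?_, ?_, ?_⟩, ?_⟩
      · intro p hp; exact absurd hp (Finset.notMem_empty p)
      · intro p hp; exact absurd hp (Finset.notMem_empty p)
      · intro p hp; exact absurd hp (Finset.notMem_empty p)
      · intro C hC; rw [h] at hC; exact absurd hC (Finset.notMem_empty C)
      · intro p hp; exact absurd hp (Finset.notMem_empty p)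
    by_cases hE : (Efam x B).Nonempty
    · -- main branch: new counterexample from maximal elements of Efam
      have h0E : ∅ ∈ Efam x B := by
        obtain ⟨C, hC⟩ := hE
        exact Efam_downset x B hC (Finset.empty_subset C)
      have hd2 : 2 ≤ sdepth (downOf B) := by
        by_contra hlt
        push_neg at hlt
        apply hnoRE
        refine ⟨singlePart _, ?_⟩
        intro p hp
        simp only [singlePart, Finset.mem_image] at hp
        obtain ⟨C, hC, rfl⟩ := hp
        have hCne : C ≠ ∅ := by
          rintro rfl
          exact ((mem_F2fam x B).1 hC).2 h0E
        have hcard := Finset.card_pos.2 (Finset.nonempty_iff_ne_empty.2 hCne)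
        show sdepth (downOf B) ≤ C.card
        omega
      have hEne1 : Efam x B ≠ {∅} := by
        intro hE1
        obtain ⟨C0, hC0⟩ := hE
        rw [mem_Efam] at hC0
        obtain ⟨b, hb, hxb, -⟩ := hC0
        have hxDB : ({x} : Finset (Fin (n + 1))) ∈ downOf B :=
          mem_downOf.2 ⟨b, hb, Finset.singleton_subset_iff.2 hxb⟩
        obtain ⟨P, hP⟩ := sdepth_spec _ hDBne
        obtain ⟨p, hp, hxp⟩ := P.covers _ hxDB
        rw [Finset.mem_Icc] at hxp
        have hxp2 : x ∈ p.2 := hxp.2 (Finset.mem_singleton_self x)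
        have hp2DB : p.2 ∈ downOf B :=
          P.sub p hp (Finset.mem_Icc.2 ⟨P.le p hp, Finset.Subset.rfl⟩)
        have hEp : p.2.erase x ∈ Efam x B := (mem_downOf_of_xmem x B hxp2).1 hp2DB
        rw [hE1, Finset.mem_singleton] at hEp
        have hsub : p.2 ⊆ {x} := by
          intro a ha
          by_cases hax : a = x
          · rw [hax]; exact Finset.mem_singleton_self x
          · exact absurd (Finset.mem_erase.2 ⟨hax, ha⟩)
              (by rw [hEp]; exact Finset.notMem_empty a)
        have hcard : p.2.card ≤ 1 :=
          le_trans (Finset.card_le_card hsub) (by simp)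
        have := hP p hp
        omega
      have hfact1 : sdepth (downOf B) ≤ sdepth (Efam x B) + 1 :=
        sdepth_Efam_ge x B hDBne hE
      have hsdF2 : sdepth (F2fam x B) < sdepth (downOf B) := by
        by_contra h
        push_neg at h
        obtain ⟨RE, hRE⟩ := sdepth_spec _ hF2ne
        exact hnoRE ⟨RE, fun p hp => le_trans h (hRE p hp)⟩
      set 𝒞 := (Efam x B).filter (fun M => ∀ C ∈ Efam x B, M ⊆ C → M = C) with h𝒞
      have h𝒞E : 𝒞 ⊆ Efam x B := Finset.filter_subset _ _
      have h𝒞xf : ∀ a ∈ 𝒞, x ∉ a := fun a ha => Efam_xfree x B a (h𝒞E ha)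
      have h𝒞anti : IsAntichainSets 𝒞 := by
        intro a ha b hb hab
        exact (Finset.mem_filter.1 ha).2 b (h𝒞E hb) hab
      have h𝒞ne : 𝒞.Nonempty := by
        obtain ⟨M, hM, hmax⟩ : ∃ M ∈ Efam x B, ∀ C ∈ Efam x B, ¬ M < C :=
          (Finset.exists_maximal hE).imp fun M hM =>
            ⟨hM.1, fun C hC hlt => lt_irrefl _ (lt_of_lt_of_le hlt (hM.2 hC hlt.le))⟩
        refine ⟨M, Finset.mem_filter.2 ⟨hM, ?_⟩⟩
        intro C hC hMC
        by_contra hne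
        exact hmax C hC (lt_of_le_of_ne hMC hne)
      have h𝒞0 : ∅ ∉ 𝒞 := by
        intro h
        have hprop := (Finset.mem_filter.1 h).2
        apply hEne1
        apply Finset.Subset.antisymm
        · intro C hC
          rw [Finset.mem_singleton]
          exact (hprop C hC (Finset.empty_subset C)).symm
        · intro C hC
          rw [Finset.mem_singleton] at hC
          rw [hC]
          exact h0E
      have hdown : downOf 𝒞 = Efam x B := by
        ext C
        rw [mem_downOf]
        constructor
        · rintro ⟨M, hM, hCM⟩
          exact Efam_downset x B (h𝒞E hM) hCM
        · intro hC
          have hne : ((Efam x B).filter (fun D => C ⊆ D)).Nonempty :=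
            ⟨C, Finset.mem_filter.2 ⟨hC, Finset.Subset.rfl⟩⟩
          obtain ⟨M, hM, hmax⟩ : ∃ M ∈ (Efam x B).filter (fun D => C ⊆ D),
              ∀ D ∈ (Efam x B).filter (fun D => C ⊆ D), ¬ M < D :=
            (Finset.exists_maximal hne).imp fun M hM =>
              ⟨hM.1, fun D hD hlt => lt_irrefl _ (lt_of_lt_of_le hlt (hM.2 hD hlt.le))⟩
          rw [Finset.mem_filter] at hM
          refine ⟨M, Finset.mem_filter.2 ⟨hM.1, ?_⟩, hM.2⟩
          intro D hD hMD
          by_contra hne2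
          exact hmax D (Finset.mem_filter.2 ⟨hD, hM.2.trans hMD⟩)
            (lt_of_le_of_ne hMD hne2)
      refine ⟨familyPull x 𝒞, pull_cex x h𝒞xf h𝒞anti h𝒞ne h𝒞0 ?_ ?_⟩
      · show (xfreeCube x \ downOf 𝒞).Nonempty
        rw [hdown]
        exact hF2ne
      · rw [hdown]
        show sdepth (F2fam x B) ≤ sdepth (Efam x B)
        omega
    · -- Efam empty: contradiction
      exfalso
      rw [Finset.not_nonempty_iff_eq_empty] at hE
      have hDBxf : ∀ C ∈ downOf B, x ∉ C := by
        intro C hC hxC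
        have := (mem_downOf_of_xmem x B hxC).1 hC
        rw [hE] at this
        exact absurd this (Finset.notMem_empty _)
      have hcardU : ((Finset.univ : Finset (Fin (n + 1))).erase x).card = n := by
        rw [Finset.card_erase_of_mem (Finset.mem_univ x)]
        simp
      have hdn : sdepth (downOf B) ≤ n := by
        obtain ⟨P, hP⟩ := sdepth_spec _ hDBne
        obtain ⟨b, hb⟩ := hBne
        obtain ⟨p, hp, -⟩ := P.covers b (mem_downOf.2 ⟨b, hb, Finset.Subset.rfl⟩)
        have hp2 : p.2 ∈ downOf B :=
          P.sub p hp (Finset.mem_Icc.2 ⟨P.le p hp, Finset.Subset.rfl⟩)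
        have hsub : p.2 ⊆ (Finset.univ : Finset (Fin (n + 1))).erase x :=
          Finset.subset_erase.2 ⟨Finset.subset_univ _, hDBxf _ hp2⟩
        have hcard := Finset.card_le_card hsub
        have := hP p hp
        omega
      apply hnoRE
      have hIcc : Finset.Icc (∅ : Finset (Fin (n + 1)))
          ((Finset.univ : Finset (Fin (n + 1))).erase x) = F2fam x B := by
        ext C
        rw [Finset.mem_Icc, mem_F2fam, hE]
        constructor
        · rintro ⟨-, h2⟩
          have := Finset.subset_erase.1 h2
          exact ⟨this.2, Finset.notMem_empty C⟩
        · rintro ⟨h1, -⟩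
          exact ⟨Finset.empty_subset C,
            Finset.subset_erase.2 ⟨Finset.subset_univ C, h1⟩⟩
      refine ⟨⟨{(∅, (Finset.univ : Finset (Fin (n + 1))).erase x)}, ?_, ?_, ?_, ?_⟩, ?_⟩
      · intro p hp
        rw [Finset.mem_singleton] at hp
        rw [hp]
        exact Finset.empty_subset _
      · intro p hp
        rw [Finset.mem_singleton] at hp
        rw [hp]
        show Finset.Icc _ _ ⊆ _
        rw [hIcc]
      · intro p hp q hq hpq
        rw [Finset.mem_singleton] at hp hq
        exact absurd (hp.trans hq.symm) hpq
      · intro C hC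
        refine ⟨_, Finset.mem_singleton_self _, ?_⟩
        show C ∈ Finset.Icc (∅ : Finset (Fin (n + 1))) ((Finset.univ : Finset (Fin (n + 1))).erase x)
        rw [hIcc]
        exact hC
      · intro p hp
        rw [Finset.mem_singleton] at hp
        rw [hp]
        show sdepth (downOf B) ≤ ((Finset.univ : Finset (Fin (n + 1))).erase x).card
        omega

lemma mainInd : ∀ (n : ℕ) (B : Finset (Finset (Fin n))), IsCex n B →
    ∃ m, m ≤ n ∧ ∃ C : Finset (Finset (Fin m)), IsCex m C ∧ ¬ Splits C := by
  intro n
  induction n with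
  | zero =>
    intro B h
    exact ⟨0, le_rfl, B, h, by rintro ⟨x, -⟩; exact x.elim0⟩
  | succ n ih =>
    intro B h
    by_cases hs : Splits B
    · obtain ⟨x, hx⟩ := hs
      obtain ⟨C, hC⟩ := descent B x h hx
      obtain ⟨m, hm, D, hD⟩ := ih C hC
      exact ⟨m, hm.trans (Nat.le_succ n), D, hD⟩
    · exact ⟨n + 1, le_rfl, B, h, hs⟩

end SDHelp

/-- If some nonempty antichain `A ⊆ 2^[n]` with `∅ ∉ A`, nonempty `U = 2^[n] \ D[A]`,
and `sdepth(U) ≤ sdepth(D[A])` splits, then there is `n' ≤ n` and a nonempty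
antichain `B ⊆ 2^[n']` with `∅ ∉ B`, nonempty `U' = 2^[n'] \ D[B]`, and
`sdepth(U') ≤ sdepth(D[B])` that does not split. -/
theorem splitting_reduction
    (n : ℕ) (hn : 1 ≤ n) (A : Finset (Finset (Fin n)))
    (hanti : IsAntichainSets A) (hAne : A.Nonempty) (hA0 : ∅ ∉ A)
    (hUne : ((Finset.univ : Finset (Finset (Fin n))) \ downOf A).Nonempty)
    (hle : sdepth ((Finset.univ : Finset (Finset (Fin n))) \ downOf A) ≤
      sdepth (downOf A))
    (hsplit : Splits A) :
    ∃ (n' : ℕ), n' ≤ n ∧ ∃ B : Finset (Finset (Fin n')),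
      IsAntichainSets B ∧ B.Nonempty ∧ ∅ ∉ B ∧
      ((Finset.univ : Finset (Finset (Fin n'))) \ downOf B).Nonempty ∧
      sdepth ((Finset.univ : Finset (Finset (Fin n'))) \ downOf B) ≤
        sdepth (downOf B) ∧
      ¬ Splits B := by
  obtain ⟨m, hm, C, ⟨h1, h2, h3, h4, h5⟩, h6⟩ :=
    SDHelp.mainInd n A ⟨hanti, hAne, hA0, hUne, hle⟩
  exact ⟨m, hm, C, h1, h2, h3, h4, h5, h6⟩
end

section
/- Let D ⊆ 2^[5] be a down set with ∅ ∈ D and nonempty complement U = 2^[5] \ D. Then sdepth(U) > sdepth(D). (This is the combinatorial statement, via Herzog–Vladoiu–Zheng, of: if I is a squarefree monomial ideal of S = K[x₁,…,x₅], then sdepth I > sdepth S/I.) -/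
open Finset

set_option maxHeartbeats 1000000

section Basics

variable {Q : Finset (Finset (Fin 5))}

/-- the trivial partition into singletons -/
def singletonIP (Q : Finset (Finset (Fin 5))) : IntervalPartition 5 Q where
  pairs := Q.image fun X => (X, X)
  le := by rintro p hp; simp only [mem_image] at hp; obtain ⟨X, _, rfl⟩ := hp; exact subset_rfl
  sub := by
    rintro p hp; simp only [mem_image] at hp; obtain ⟨X, hX, rfl⟩ := hp
    intro Z hZ; simp only [Finset.Icc_self, mem_singleton] at hZ; subst hZ; exact hX
  disj := by
    rintro p hp q hq hpq
    simp only [mem_image] at hp hq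
    obtain ⟨X, hX, rfl⟩ := hp; obtain ⟨Y, hY, rfl⟩ := hq
    simp only [Finset.Icc_self]
    rw [Finset.disjoint_singleton_left, mem_singleton]
    intro h; exact hpq (by simp [h])
  covers := by
    intro C hC
    exact ⟨(C, C), mem_image_of_mem _ hC, by simp⟩

lemma sdepthSet_nonempty (Q : Finset (Finset (Fin 5))) :
    {k | ∃ P : IntervalPartition 5 Q, ∀ p ∈ P.pairs, k ≤ p.2.card}.Nonempty :=
  ⟨0, singletonIP Q, fun _ _ => Nat.zero_le _⟩

lemma bddAbove_sdepthSet (hQ : Q.Nonempty) :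
    BddAbove {k | ∃ P : IntervalPartition 5 Q, ∀ p ∈ P.pairs, k ≤ p.2.card} := by
  refine ⟨5, ?_⟩
  rintro k ⟨P, hP⟩
  obtain ⟨X, hX⟩ := hQ
  obtain ⟨p, hp, _⟩ := P.covers X hX
  calc k ≤ p.2.card := hP p hp
    _ ≤ (univ : Finset (Fin 5)).card := card_le_card (subset_univ _)
    _ = 5 := by simp

lemma le_sdepth (hQ : Q.Nonempty) (k : ℕ) (P : IntervalPartition 5 Q)
    (h : ∀ p ∈ P.pairs, k ≤ p.2.card) : k ≤ sdepth Q :=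
  le_csSup (bddAbove_sdepthSet hQ) ⟨P, h⟩

lemma sdepth_le (m : ℕ) (h : ∀ P : IntervalPartition 5 Q, ∃ p ∈ P.pairs, p.2.card ≤ m) :
    sdepth Q ≤ m := by
  apply csSup_le (sdepthSet_nonempty Q)
  rintro k ⟨P, hP⟩
  obtain ⟨p, hp, hcard⟩ := h P
  exact le_trans (hP p hp) hcard

lemma mem_IccF {A B X : Finset (Fin 5)} (h1 : A ⊆ X) (h2 : X ⊆ B) : X ∈ Finset.Icc A B := by
  rw [Finset.mem_Icc]; exact ⟨h1, h2⟩

lemma mem_IccF' {A B X : Finset (Fin 5)} (h : X ∈ Finset.Icc A B) : A ⊆ X ∧ X ⊆ B := by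
  rw [Finset.mem_Icc] at h; exact h

end Basics

section LemmaA

def Ti (i : Fin 5) : Finset (Fin 5) := {i, i+1, i+2}
def Pa (i : Fin 5) : Finset (Fin 5) := {i, i+1}
def Pb (i : Fin 5) : Finset (Fin 5) := {i, i+2}
def Vi (i : Fin 5) : Finset (Fin 5) := {i-1, i, i+2}

-- decidable facts
lemma dU_Pa : ∀ i j : Fin 5, Pa i = Pa j → i = j := by decide
lemma dU_Pb : ∀ i j : Fin 5, Pb i = Pb j → i = j := by decide
lemma dne_PaPb : ∀ i j : Fin 5, Pa i ≠ Pb j := by decide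
lemma dU_T : ∀ i j : Fin 5, Ti i = Ti j → i = j := by decide
lemma dU_V : ∀ i j : Fin 5, Vi i = Vi j → i = j := by decide
lemma dne_TV : ∀ i j : Fin 5, Ti i ≠ Vi j := by decide
lemma dne_Pa_single : ∀ i j : Fin 5, Pa i ≠ {j} := by decide
lemma dne_Pb_single : ∀ i j : Fin 5, Pb i ≠ {j} := by decide
lemma dne_T_single : ∀ i j : Fin 5, Ti i ≠ {j} := by decide
lemma dne_V_single : ∀ i j : Fin 5, Vi i ≠ {j} := by decide
lemma dne_T_Pa : ∀ i j : Fin 5, Ti i ≠ Pa j := by decide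
lemma dne_T_Pb : ∀ i j : Fin 5, Ti i ≠ Pb j := by decide
lemma dne_V_Pa : ∀ i j : Fin 5, Vi i ≠ Pa j := by decide
lemma dne_V_Pb : ∀ i j : Fin 5, Vi i ≠ Pb j := by decide
lemma d_single_T : ∀ i : Fin 5, ({i} : Finset (Fin 5)) ⊆ Ti i := by decide
lemma d_single_Pa : ∀ i : Fin 5, ({i} : Finset (Fin 5)) ⊆ Pa i := by decide
lemma d_single_Pb : ∀ i : Fin 5, ({i} : Finset (Fin 5)) ⊆ Pb i := by decide
lemma d_Pa_T : ∀ i : Fin 5, Pa i ⊆ Ti i := by decide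
lemma d_Pb_T : ∀ i : Fin 5, Pb i ⊆ Ti i := by decide
lemma d_Pb_V : ∀ i : Fin 5, Pb i ⊆ Vi i := by decide
lemma d_card_T : ∀ i : Fin 5, (Ti i).card = 3 := by decide
lemma d_card_V : ∀ i : Fin 5, (Vi i).card = 3 := by decide
lemma d_pair_rep : ∀ X : Finset (Fin 5), X.card = 2 → ∃ i, X = Pa i ∨ X = Pb i := by decide
lemma d_enum_T : ∀ (i : Fin 5) (X : Finset (Fin 5)), {i} ⊆ X → X ⊆ Ti i →
    (X = {i} ∨ X = Pa i ∨ X = Pb i ∨ X = Ti i) := by decide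
lemma d_enum_PaT : ∀ (i : Fin 5) (X : Finset (Fin 5)), Pa i ⊆ X → X ⊆ Ti i →
    (X = Pa i ∨ X = Ti i) := by decide
lemma d_enum_PbV : ∀ (i : Fin 5) (X : Finset (Fin 5)), Pb i ⊆ X → X ⊆ Vi i →
    (X = Pb i ∨ X = Vi i) := by decide

noncomputable def rep (U : Finset (Finset (Fin 5))) (X : Finset (Fin 5)) :
    Finset (Fin 5) × Finset (Fin 5) :=
  if h1 : ∃ i : Fin 5, X = {i} then ({h1.choose}, Ti h1.choose)
  else if h2 : ∃ i, (X = Pa i ∨ X = Pb i) ∧ {i} ∈ U then ({h2.choose}, Ti h2.choose)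
  else if h3 : ∃ i, X = Pa i then (Pa h3.choose, Ti h3.choose)
  else if h4 : ∃ i, X = Pb i then (Pb h4.choose, Vi h4.choose)
  else if h5 : ∃ i, X = Ti i ∧ {i} ∈ U then ({h5.choose}, Ti h5.choose)
  else if h6 : ∃ i, X = Ti i ∧ Pa i ∈ U then (Pa h6.choose, Ti h6.choose)
  else if h7 : ∃ i, X = Vi i ∧ {i} ∉ U ∧ Pb i ∈ U then (Pb h7.choose, Vi h7.choose)
  else (X, X)

variable {U : Finset (Finset (Fin 5))}

lemma rep_singleton (i : Fin 5) : rep U {i} = ({i}, Ti i) := by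
  unfold rep
  split_ifs with h1 h2 h3 h4 h5 h6 h7
  · have e : i = h1.choose := Finset.singleton_injective h1.choose_spec
    rw [← e]
  all_goals exact absurd ⟨i, rfl⟩ h1

lemma rep_Pa (i : Fin 5) (hi : ({i} : Finset (Fin 5)) ∈ U) : rep U (Pa i) = ({i}, Ti i) := by
  unfold rep
  split_ifs with h1 h2 h3 h4 h5 h6 h7
  · exact absurd h1.choose_spec (dne_Pa_single _ _)
  · obtain ⟨hor, _⟩ := h2.choose_spec
    have e : i = h2.choose := by
      rcases hor with h | h
      · exact dU_Pa _ _ h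
      · exact absurd h (dne_PaPb _ _)
    rw [← e]
  all_goals exact absurd ⟨i, Or.inl rfl, hi⟩ h2

lemma rep_Pa' (i : Fin 5) (hi : ({i} : Finset (Fin 5)) ∉ U) : rep U (Pa i) = (Pa i, Ti i) := by
  unfold rep
  split_ifs with h1 h2 h3 h4 h5 h6 h7
  · exact absurd h1.choose_spec (dne_Pa_single _ _)
  · obtain ⟨hor, hU⟩ := h2.choose_spec
    exfalso
    rcases hor with h | h
    · exact hi ((dU_Pa _ _ h) ▸ hU)
    · exact dne_PaPb _ _ h
  · have e : i = h3.choose := dU_Pa _ _ h3.choose_spec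
    rw [← e]
  all_goals exact absurd ⟨i, rfl⟩ h3

lemma rep_Pb (i : Fin 5) (hi : ({i} : Finset (Fin 5)) ∈ U) : rep U (Pb i) = ({i}, Ti i) := by
  unfold rep
  split_ifs with h1 h2 h3 h4 h5 h6 h7
  · exact absurd h1.choose_spec (dne_Pb_single _ _)
  · obtain ⟨hor, _⟩ := h2.choose_spec
    have e : i = h2.choose := by
      rcases hor with h | h
      · exact absurd h.symm (dne_PaPb _ _)
      · exact dU_Pb _ _ h
    rw [← e]
  all_goals exact absurd ⟨i, Or.inr rfl, hi⟩ h2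

lemma rep_Pb' (i : Fin 5) (hi : ({i} : Finset (Fin 5)) ∉ U) : rep U (Pb i) = (Pb i, Vi i) := by
  unfold rep
  split_ifs with h1 h2 h3 h4 h5 h6 h7
  · exact absurd h1.choose_spec (dne_Pb_single _ _)
  · obtain ⟨hor, hU⟩ := h2.choose_spec
    exfalso
    rcases hor with h | h
    · exact dne_PaPb _ _ h.symm
    · exact hi ((dU_Pb _ _ h) ▸ hU)
  · exact absurd h3.choose_spec.symm (dne_PaPb _ _)
  · have e : i = h4.choose := dU_Pb _ _ h4.choose_spec
    rw [← e]
  all_goals exact absurd ⟨i, rfl⟩ h4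

lemma rep_T (i : Fin 5) (hi : ({i} : Finset (Fin 5)) ∈ U) : rep U (Ti i) = ({i}, Ti i) := by
  unfold rep
  split_ifs with h1 h2 h3 h4 h5 h6 h7
  · exact absurd h1.choose_spec (dne_T_single _ _)
  · obtain ⟨hor, _⟩ := h2.choose_spec
    exfalso
    rcases hor with h | h
    · exact dne_T_Pa _ _ h
    · exact dne_T_Pb _ _ h
  · exact absurd h3.choose_spec (dne_T_Pa _ _)
  · exact absurd h4.choose_spec (dne_T_Pb _ _)
  · obtain ⟨hT, _⟩ := h5.choose_spec
    have e : i = h5.choose := dU_T _ _ hT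
    rw [← e]
  all_goals exact absurd ⟨i, rfl, hi⟩ h5

lemma rep_T' (i : Fin 5) (hi : ({i} : Finset (Fin 5)) ∉ U) (hp : Pa i ∈ U) :
    rep U (Ti i) = (Pa i, Ti i) := by
  unfold rep
  split_ifs with h1 h2 h3 h4 h5 h6 h7
  · exact absurd h1.choose_spec (dne_T_single _ _)
  · obtain ⟨hor, _⟩ := h2.choose_spec
    exfalso
    rcases hor with h | h
    · exact dne_T_Pa _ _ h
    · exact dne_T_Pb _ _ h
  · exact absurd h3.choose_spec (dne_T_Pa _ _)
  · exact absurd h4.choose_spec (dne_T_Pb _ _)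
  · obtain ⟨hT, hU⟩ := h5.choose_spec
    exact absurd ((dU_T _ _ hT) ▸ hU) hi
  · obtain ⟨hT, _⟩ := h6.choose_spec
    have e : i = h6.choose := dU_T _ _ hT
    rw [← e]
  all_goals exact absurd ⟨i, rfl, hp⟩ h6

lemma rep_V (i : Fin 5) (hi : ({i} : Finset (Fin 5)) ∉ U) (hp : Pb i ∈ U) :
    rep U (Vi i) = (Pb i, Vi i) := by
  unfold rep
  split_ifs with h1 h2 h3 h4 h5 h6 h7
  · exact absurd h1.choose_spec (dne_V_single _ _)
  · obtain ⟨hor, _⟩ := h2.choose_spec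
    exfalso
    rcases hor with h | h
    · exact dne_V_Pa _ _ h
    · exact dne_V_Pb _ _ h
  · exact absurd h3.choose_spec (dne_V_Pa _ _)
  · exact absurd h4.choose_spec (dne_V_Pb _ _)
  · exact absurd h5.choose_spec.1.symm (dne_TV _ _)
  · exact absurd h6.choose_spec.1.symm (dne_TV _ _)
  · obtain ⟨hV, _, _⟩ := h7.choose_spec
    have e : i = h7.choose := dU_V _ _ hV
    rw [← e]
  all_goals exact absurd ⟨i, rfl, hi, hp⟩ h7

lemma rep_spec (h₀ : (∅ : Finset (Fin 5)) ∉ U) {X : Finset (Fin 5)} (hX : X ∈ U) :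
    (∃ i, {i} ∈ U ∧ rep U X = ({i}, Ti i) ∧ X ∈ Finset.Icc ({i} : Finset (Fin 5)) (Ti i)) ∨
    (∃ i, {i} ∉ U ∧ Pa i ∈ U ∧ rep U X = (Pa i, Ti i) ∧ X ∈ Finset.Icc (Pa i) (Ti i)) ∨
    (∃ i, {i} ∉ U ∧ Pb i ∈ U ∧ rep U X = (Pb i, Vi i) ∧ X ∈ Finset.Icc (Pb i) (Vi i)) ∨
    (3 ≤ X.card ∧ rep U X = (X, X)) := by
  unfold rep
  split_ifs with h1 h2 h3 h4 h5 h6 h7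
  · left
    have hs := h1.choose_spec
    exact ⟨h1.choose, hs ▸ hX, rfl, mem_IccF (fun _ hz => hs.symm ▸ hz) (fun _ hz => d_single_T _ (hs ▸ hz))⟩
  · left
    obtain ⟨hor, hU⟩ := h2.choose_spec
    refine ⟨h2.choose, hU, rfl, ?_⟩
    rcases hor with h | h
    · exact mem_IccF (fun _ hz => h.symm ▸ d_single_Pa _ hz) (fun _ hz => d_Pa_T _ (h ▸ hz))
    · exact mem_IccF (fun _ hz => h.symm ▸ d_single_Pb _ hz) (fun _ hz => d_Pb_T _ (h ▸ hz))
  · right; left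
    have hs := h3.choose_spec
    exact ⟨h3.choose, fun hU => h2 ⟨h3.choose, Or.inl hs, hU⟩, hs ▸ hX, rfl,
      mem_IccF (fun _ hz => hs.symm ▸ hz) (fun _ hz => d_Pa_T _ (hs ▸ hz))⟩
  · right; right; left
    have hs := h4.choose_spec
    exact ⟨h4.choose, fun hU => h2 ⟨h4.choose, Or.inr hs, hU⟩, hs ▸ hX, rfl,
      mem_IccF (fun _ hz => hs.symm ▸ hz) (fun _ hz => d_Pb_V _ (hs ▸ hz))⟩
  · left
    obtain ⟨hT, hU⟩ := h5.choose_spec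
    exact ⟨h5.choose, hU, rfl, mem_IccF (fun _ hz => hT.symm ▸ d_single_T _ hz) (fun _ hz => hT ▸ hz)⟩
  · right; left
    obtain ⟨hT, hU⟩ := h6.choose_spec
    exact ⟨h6.choose, fun hU2 => h5 ⟨h6.choose, hT, hU2⟩, hU, rfl,
      mem_IccF (fun _ hz => hT.symm ▸ d_Pa_T _ hz) (fun _ hz => hT ▸ hz)⟩
  · right; right; left
    obtain ⟨hV, hn, hU⟩ := h7.choose_spec
    exact ⟨h7.choose, hn, hU, rfl, mem_IccF (fun _ hz => hV.symm ▸ d_Pb_V _ hz) (fun _ hz => hV ▸ hz)⟩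
  · right; right; right
    refine ⟨?_, rfl⟩
    by_contra hlt
    push_neg at hlt
    interval_cases hc : X.card
    · exact h₀ (Finset.card_eq_zero.1 hc ▸ hX)
    · obtain ⟨i, hi⟩ := Finset.card_eq_one.1 hc
      exact h1 ⟨i, hi⟩
    · obtain ⟨i, hi⟩ := d_pair_rep X hc
      rcases hi with h | h
      · exact h3 ⟨i, h⟩
      · exact h4 ⟨i, h⟩

lemma rep_uniq (h₀ : (∅ : Finset (Fin 5)) ∉ U) {Z X : Finset (Fin 5)} (hZ : Z ∈ U) (hX : X ∈ U)
    (h : Z ∈ Finset.Icc (rep U X).1 (rep U X).2) : rep U Z = rep U X := by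
  rcases rep_spec h₀ hX with ⟨i, hiU, he, -⟩ | ⟨i, hiU, hpU, he, -⟩ | ⟨i, hiU, hpU, he, -⟩ |
    ⟨hc, he⟩ <;> rw [he] at h ⊢ <;> obtain ⟨h1, h2⟩ := mem_IccF' h
  · rcases d_enum_T i Z h1 h2 with rfl | rfl | rfl | rfl
    · exact rep_singleton i
    · exact rep_Pa i hiU
    · exact rep_Pb i hiU
    · exact rep_T i hiU
  · rcases d_enum_PaT i Z h1 h2 with rfl | rfl
    · exact rep_Pa' i hiU
    · exact rep_T' i hiU hpU
  · rcases d_enum_PbV i Z h1 h2 with rfl | rfl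
    · exact rep_Pb' i hiU
    · exact rep_V i hiU hpU
  · have hzx : Z = X := Finset.Subset.antisymm h2 h1
    rw [hzx, he]

lemma lemmaA (U : Finset (Finset (Fin 5))) (hup : ∀ X ∈ U, ∀ Y : Finset (Fin 5), X ⊆ Y → Y ∈ U)
    (h₀ : (∅ : Finset (Fin 5)) ∉ U) :
    ∃ P : IntervalPartition 5 U, ∀ p ∈ P.pairs, 3 ≤ p.2.card := by
  have hsub : ∀ X ∈ U, Finset.Icc (rep U X).1 (rep U X).2 ⊆ U := by
    intro X hX
    rcases rep_spec h₀ hX with ⟨i, hiU, he, -⟩ | ⟨i, hiU, hpU, he, -⟩ | ⟨i, hiU, hpU, he, -⟩ |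
      ⟨hc, he⟩ <;> rw [he] <;> intro Z hZmem <;> obtain ⟨hz1, hz2⟩ := mem_IccF' hZmem
    · exact hup _ hiU Z hz1
    · exact hup _ hpU Z hz1
    · exact hup _ hpU Z hz1
    · rwa [Finset.Subset.antisymm hz2 hz1]
  refine ⟨⟨U.image (rep U), ?_, ?_, ?_, ?_⟩, ?_⟩
  · intro p hp
    obtain ⟨X, hX, rfl⟩ := Finset.mem_image.1 hp
    rcases rep_spec h₀ hX with ⟨i, hiU, he, -⟩ | ⟨i, hiU, hpU, he, -⟩ | ⟨i, hiU, hpU, he, -⟩ |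
      ⟨hc, he⟩ <;> rw [he]
    · exact d_single_T i
    · exact d_Pa_T i
    · exact d_Pb_V i
  · intro p hp
    obtain ⟨X, hX, rfl⟩ := Finset.mem_image.1 hp
    exact hsub X hX
  · intro p hp q hq hne
    obtain ⟨X, hX, rfl⟩ := Finset.mem_image.1 hp
    obtain ⟨Y, hY, rfl⟩ := Finset.mem_image.1 hq
    rw [Finset.disjoint_left]
    intro Z hZp hZq
    have hZU : Z ∈ U := hsub X hX hZp
    have e1 := rep_uniq h₀ hZU hX hZp
    have e2 := rep_uniq h₀ hZU hY hZq
    exact hne (e1 ▸ e2)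
  · intro C hC
    refine ⟨rep U C, Finset.mem_image_of_mem _ hC, ?_⟩
    rcases rep_spec h₀ hC with ⟨i, hiU, he, hin⟩ | ⟨i, hiU, hpU, he, hin⟩ |
      ⟨i, hiU, hpU, he, hin⟩ | ⟨hc, he⟩ <;> rw [he]
    · exact hin
    · exact hin
    · exact hin
    · exact mem_IccF (Finset.Subset.refl C) (Finset.Subset.refl C)
  · intro p hp
    obtain ⟨X, hX, rfl⟩ := Finset.mem_image.1 hp
    rcases rep_spec h₀ hX with ⟨i, hiU, he, -⟩ | ⟨i, hiU, hpU, he, -⟩ | ⟨i, hiU, hpU, he, -⟩ |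
      ⟨hc, he⟩ <;> rw [he]
    · rw [d_card_T i]
    · rw [d_card_T i]
    · rw [d_card_V i]
    · exact hc

end LemmaA
section Machinery

variable {Q Q' : Finset (Finset (Fin 5))}

/-- transport a partition along an equality of families -/
def castIP (h : Q = Q') (P : IntervalPartition 5 Q) : IntervalPartition 5 Q' where
  pairs := P.pairs
  le := P.le
  sub := fun p hp => h ▸ P.sub p hp
  disj := P.disj
  covers := fun C hC => P.covers C (h.symm ▸ hC)

/-- restriction of an interval partition to the subcube `2^W`. -/
def restrictIP (P : IntervalPartition 5 Q) (W : Finset (Fin 5)) :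
    IntervalPartition 5 (Q.filter (· ⊆ W)) where
  pairs := (P.pairs.filter fun p => p.1 ⊆ W).image fun p => (p.1, p.2 ∩ W)
  le := by
    intro p hp
    obtain ⟨q, hq, rfl⟩ := Finset.mem_image.1 hp
    obtain ⟨hqP, hqW⟩ := Finset.mem_filter.1 hq
    exact Finset.subset_inter (P.le q hqP) hqW
  sub := by
    intro p hp
    obtain ⟨q, hq, rfl⟩ := Finset.mem_image.1 hp
    obtain ⟨hqP, hqW⟩ := Finset.mem_filter.1 hq
    intro Z hZ
    obtain ⟨h1, h2⟩ := mem_IccF' hZ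
    exact Finset.mem_filter.2
      ⟨P.sub q hqP (mem_IccF h1 (h2.trans Finset.inter_subset_left)),
        h2.trans Finset.inter_subset_right⟩
  disj := by
    intro p hp q hq hne
    obtain ⟨p₀, hp₀, rfl⟩ := Finset.mem_image.1 hp
    obtain ⟨q₀, hq₀, rfl⟩ := Finset.mem_image.1 hq
    rw [Finset.disjoint_left]
    intro Z hZp hZq
    obtain ⟨hp1, hp2⟩ := mem_IccF' hZp
    obtain ⟨hq1, hq2⟩ := mem_IccF' hZq
    by_cases hpq : p₀ = q₀
    · exact hne (by rw [hpq])
    · have hd := P.disj p₀ (Finset.mem_filter.1 hp₀).1 q₀ (Finset.mem_filter.1 hq₀).1 hpq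
      rw [Finset.disjoint_left] at hd
      exact hd (mem_IccF hp1 (hp2.trans Finset.inter_subset_left))
        (mem_IccF hq1 (hq2.trans Finset.inter_subset_left))
  covers := by
    intro C hC
    obtain ⟨hCQ, hCW⟩ := Finset.mem_filter.1 hC
    obtain ⟨q, hq, hCin⟩ := P.covers C hCQ
    obtain ⟨h1, h2⟩ := mem_IccF' hCin
    refine ⟨(q.1, q.2 ∩ W), Finset.mem_image.2 ⟨q, Finset.mem_filter.2 ⟨hq, h1.trans hCW⟩, rfl⟩,
      mem_IccF h1 (Finset.subset_inter h2 hCW)⟩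

/-- complement (order-reversing) image of an interval partition. -/
def complIP (P : IntervalPartition 5 Q) : IntervalPartition 5 (Q.image compl) where
  pairs := P.pairs.image fun p => (p.2ᶜ, p.1ᶜ)
  le := by
    intro p hp
    obtain ⟨q, hq, rfl⟩ := Finset.mem_image.1 hp
    exact Finset.compl_subset_compl.2 (P.le q hq)
  sub := by
    intro p hp
    obtain ⟨q, hq, rfl⟩ := Finset.mem_image.1 hp
    intro Z hZ
    obtain ⟨h1, h2⟩ := mem_IccF' hZ
    have hA : q.1 ⊆ Zᶜ := by
      have := Finset.compl_subset_compl.2 h2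
      rwa [compl_compl] at this
    have hB : Zᶜ ⊆ q.2 := by
      have := Finset.compl_subset_compl.2 h1
      rwa [compl_compl] at this
    have : Zᶜᶜ ∈ Q.image compl := Finset.mem_image_of_mem _ (P.sub q hq (mem_IccF hA hB))
    rwa [compl_compl] at this
  disj := by
    intro p hp q hq hne
    obtain ⟨p₀, hp₀, rfl⟩ := Finset.mem_image.1 hp
    obtain ⟨q₀, hq₀, rfl⟩ := Finset.mem_image.1 hq
    rw [Finset.disjoint_left]
    intro Z hZp hZq
    obtain ⟨hp1, hp2⟩ := mem_IccF' hZp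
    obtain ⟨hq1, hq2⟩ := mem_IccF' hZq
    by_cases hpq : p₀ = q₀
    · exact hne (by rw [hpq])
    · have hd := P.disj p₀ hp₀ q₀ hq₀ hpq
      rw [Finset.disjoint_left] at hd
      have a1 : p₀.1 ⊆ Zᶜ := by
        have := Finset.compl_subset_compl.2 hp2; rwa [compl_compl] at this
      have a2 : Zᶜ ⊆ p₀.2 := by
        have := Finset.compl_subset_compl.2 hp1; rwa [compl_compl] at this
      have a3 : q₀.1 ⊆ Zᶜ := by
        have := Finset.compl_subset_compl.2 hq2; rwa [compl_compl] at this
      have a4 : Zᶜ ⊆ q₀.2 := by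
        have := Finset.compl_subset_compl.2 hq1; rwa [compl_compl] at this
      exact hd (mem_IccF a1 a2) (mem_IccF a3 a4)
  covers := by
    intro C hC
    obtain ⟨X, hX, rfl⟩ := Finset.mem_image.1 hC
    obtain ⟨q, hq, hXin⟩ := P.covers X hX
    obtain ⟨h1, h2⟩ := mem_IccF' hXin
    exact ⟨(q.2ᶜ, q.1ᶜ), Finset.mem_image.2 ⟨q, hq, rfl⟩,
      mem_IccF (Finset.compl_subset_compl.2 h2) (Finset.compl_subset_compl.2 h1)⟩

lemma compl_image_image (Q : Finset (Finset (Fin 5))) : (Q.image compl).image compl = Q := by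
  ext X
  simp only [Finset.mem_image]
  constructor
  · rintro ⟨Y, ⟨Z, hZ, rfl⟩, rfl⟩
    rwa [compl_compl]
  · intro hX
    exact ⟨Xᶜ, ⟨X, hX, rfl⟩, compl_compl X⟩

lemma mem_compl_image {X : Finset (Fin 5)} : X ∈ Q.image compl ↔ Xᶜ ∈ Q := by
  simp only [Finset.mem_image]
  constructor
  · rintro ⟨Y, hY, rfl⟩
    rwa [compl_compl]
  · intro h
    exact ⟨Xᶜ, h, compl_compl X⟩

/-- alternating sum over an interval -/
lemma sum_icc_neg_one (A B : Finset (Fin 5)) (h : A ⊆ B) :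
    ∑ X ∈ Finset.Icc A B, (-1 : ℤ) ^ X.card =
      if A = B then (-1 : ℤ) ^ A.card else 0 := by
  have himg : Finset.Icc A B = (B \ A).powerset.image (A ∪ ·) := by
    ext Z
    simp only [Finset.mem_image, Finset.mem_powerset]
    constructor
    · intro hZ
      obtain ⟨h1, h2⟩ := mem_IccF' hZ
      exact ⟨Z \ A, Finset.sdiff_subset_sdiff h2 (Finset.Subset.refl A),
        Finset.union_sdiff_of_subset h1⟩
    · rintro ⟨Y, hY, rfl⟩
      refine mem_IccF Finset.subset_union_left (Finset.union_subset h (hY.trans Finset.sdiff_subset))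
  rw [himg, Finset.sum_image ?inj]
  case inj =>
    intro Y1 h1 Y2 h2 he
    rw [Finset.mem_coe, Finset.mem_powerset] at h1 h2
    have d1 : Disjoint A Y1 := Finset.disjoint_of_subset_right h1 Finset.sdiff_disjoint.symm
    have d2 : Disjoint A Y2 := Finset.disjoint_of_subset_right h2 Finset.sdiff_disjoint.symm
    have : (A ∪ Y1) \ A = (A ∪ Y2) \ A := congrArg (· \ A) he
    rwa [Finset.union_sdiff_cancel_left d1, Finset.union_sdiff_cancel_left d2] at this
  have hcard : ∀ Y ∈ (B \ A).powerset, (-1 : ℤ) ^ (A ∪ Y).card = (-1) ^ A.card * (-1) ^ Y.card := by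
    intro Y hY
    rw [Finset.mem_powerset] at hY
    have d : Disjoint A Y := Finset.disjoint_of_subset_right hY Finset.sdiff_disjoint.symm
    rw [Finset.card_union_of_disjoint d, pow_add]
  rw [Finset.sum_congr rfl hcard, ← Finset.mul_sum, Finset.sum_powerset_neg_one_pow_card]
  by_cases hAB : A = B
  · have : B \ A = ∅ := by rw [hAB, Finset.sdiff_self]
    rw [this]
    simp [hAB]
  · have : B \ A ≠ ∅ := by
      intro hemp
      exact hAB (Finset.Subset.antisymm h (by
        intro z hz
        by_contra hzA
        exact (Finset.notMem_empty z) (hemp ▸ Finset.mem_sdiff.2 ⟨hz, hzA⟩)))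
    simp [this, hAB]

lemma partition_sum (P : IntervalPartition 5 Q) :
    ∑ X ∈ Q, (-1 : ℤ) ^ X.card =
      ∑ p ∈ P.pairs, ∑ X ∈ Finset.Icc p.1 p.2, (-1 : ℤ) ^ X.card := by
  have hQ : Q = P.pairs.biUnion (fun p => Finset.Icc p.1 p.2) := by
    ext X
    rw [Finset.mem_biUnion]
    constructor
    · intro hX
      exact P.covers X hX
    · rintro ⟨p, hp, hX⟩
      exact P.sub p hp hX
  rw [Finset.sum_congr hQ (fun _ _ => rfl)]
  exact Finset.sum_biUnion (fun p hp q hq hne => P.disj p hp q hq hne)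

lemma chi_nonneg (P : IntervalPartition 5 Q) (h2 : ∀ p ∈ P.pairs, p.1.card = 2) :
    0 ≤ ∑ X ∈ Q, (-1 : ℤ) ^ X.card := by
  rw [partition_sum P]
  apply Finset.sum_nonneg
  intro p hp
  rw [sum_icc_neg_one p.1 p.2 (P.le p hp)]
  by_cases h : p.1 = p.2
  · rw [if_pos h, h2 p hp]
    norm_num
  · rw [if_neg h]

end Machinery
section Transport

def vfun (a b c d t : Fin 5) : Fin 5 → Fin 5 := fun i =>
  if i = 0 then a else if i = 1 then b else if i = 2 then c else if i = 3 then d else t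

lemma vfun_inj {a b c d t : Fin 5} (h1 : a ≠ b) (h2 : a ≠ c) (h3 : a ≠ d) (h4 : a ≠ t)
    (h5 : b ≠ c) (h6 : b ≠ d) (h7 : b ≠ t) (h8 : c ≠ d) (h9 : c ≠ t) (h10 : d ≠ t) :
    Function.Injective (vfun a b c d t) := by
  intro x y hxy
  fin_cases x <;> fin_cases y <;> simp_all [vfun]

noncomputable def mkPerm (a b c d t : Fin 5) (h : Function.Injective (vfun a b c d t)) : Equiv.Perm (Fin 5) :=
  Equiv.ofBijective _ ((Fintype.bijective_iff_injective_and_card (vfun a b c d t)).2 ⟨h, rfl⟩)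

lemma mkPerm_apply (a b c d t : Fin 5) (h) (i : Fin 5) :
    mkPerm a b c d t h i = vfun a b c d t i := rfl

lemma mem_image_symm {σ : Equiv.Perm (Fin 5)} {X : Finset (Fin 5)} {z : Fin 5} :
    z ∈ X.image σ.symm ↔ σ z ∈ X := by
  rw [Finset.mem_image]
  constructor
  · rintro ⟨x, hx, rfl⟩
    rwa [Equiv.apply_symm_apply]
  · intro h
    exact ⟨σ z, h, Equiv.symm_apply_apply σ z⟩

lemma pair_subset_image_symm {σ : Equiv.Perm (Fin 5)} {X : Finset (Fin 5)} {u v : Fin 5} :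
    ({u, v} : Finset (Fin 5)) ⊆ X.image σ.symm ↔ ({σ u, σ v} : Finset (Fin 5)) ⊆ X := by
  simp only [Finset.insert_subset_iff, Finset.singleton_subset_iff, mem_image_symm]

lemma mem_image_perm {σ : Equiv.Perm (Fin 5)} {A : Finset (Finset (Fin 5))} {X : Finset (Fin 5)} :
    X ∈ A.image (fun Y => Y.image σ) ↔ X.image σ.symm ∈ A := by
  rw [Finset.mem_image]
  constructor
  · rintro ⟨Y, hY, rfl⟩
    have : (Y.image σ).image σ.symm = Y := by
      rw [Finset.image_image]
      simp [Equiv.symm_comp_self]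
    rwa [this]
  · intro h
    refine ⟨X.image σ.symm, h, ?_⟩
    rw [Finset.image_image]
    simp [Equiv.self_comp_symm]

lemma sum_image_perm (σ : Equiv.Perm (Fin 5)) (A : Finset (Finset (Fin 5))) :
    ∑ X ∈ A.image (fun Y => Y.image σ), (-1 : ℤ) ^ X.card = ∑ Y ∈ A, (-1 : ℤ) ^ Y.card := by
  rw [Finset.sum_image]
  · apply Finset.sum_congr rfl
    intro Y _
    rw [Finset.card_image_of_injective _ σ.injective]
  · intro y1 _ y2 _ he
    exact Finset.image_injective σ.injective he

def std2K2 : Finset (Finset (Fin 5)) :=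
  Finset.univ.filter fun X => X ⊆ ({0, 1, 2, 3} : Finset (Fin 5)) ∧
    ¬(({0, 1} : Finset (Fin 5)) ⊆ X) ∧ ¬(({2, 3} : Finset (Fin 5)) ⊆ X)

def stdC5 : Finset (Finset (Fin 5)) :=
  Finset.univ.filter fun X => ¬(({0, 1} : Finset (Fin 5)) ⊆ X) ∧ ¬(({1, 2} : Finset (Fin 5)) ⊆ X) ∧
    ¬(({2, 3} : Finset (Fin 5)) ⊆ X) ∧ ¬(({3, 4} : Finset (Fin 5)) ⊆ X) ∧
    ¬(({4, 0} : Finset (Fin 5)) ⊆ X)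

lemma std2K2_sum : ∑ X ∈ std2K2, (-1 : ℤ) ^ X.card = 1 := by decide

lemma stdC5_sum : ∑ X ∈ stdC5, (-1 : ℤ) ^ X.card = 1 := by decide

end Transport
section TransportSums

lemma subset_of_image_symm {σ : Equiv.Perm (Fin 5)} {X S T : Finset (Fin 5)}
    (hS : S = T.image σ) (hsub : X.image σ.symm ⊆ T) : X ⊆ S := by
  intro z hz
  have h1 : σ.symm z ∈ X.image σ.symm := Finset.mem_image_of_mem _ hz
  rw [hS]
  exact Finset.mem_image.2 ⟨σ.symm z, hsub h1, σ.apply_symm_apply z⟩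

lemma image_symm_subset {σ : Equiv.Perm (Fin 5)} {X S T : Finset (Fin 5)}
    (hS : S = T.image σ) (hsub : X ⊆ S) : X.image σ.symm ⊆ T := by
  intro z hz
  rw [mem_image_symm] at hz
  have : σ z ∈ T.image σ := hS ▸ hsub hz
  obtain ⟨w, hw, hww⟩ := Finset.mem_image.1 this
  rwa [← σ.injective hww]

lemma sum2K2 (E : Finset (Finset (Fin 5))) (a b c d : Fin 5)
    (n1 : a ≠ b) (n2 : a ≠ c) (n3 : a ≠ d) (n4 : b ≠ c) (n5 : b ≠ d) (n6 : c ≠ d)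
    (hchar : ∀ X : Finset (Fin 5), X ⊆ ({a, b, c, d} : Finset (Fin 5)) →
      (X ∈ E ↔ ¬(({a, b} : Finset (Fin 5)) ⊆ X) ∧ ¬(({c, d} : Finset (Fin 5)) ⊆ X))) :
    ∑ X ∈ E.filter (· ⊆ ({a, b, c, d} : Finset (Fin 5))), (-1 : ℤ) ^ X.card = 1 := by
  obtain ⟨t, ht⟩ : ∃ t : Fin 5, t ∉ ({a, b, c, d} : Finset (Fin 5)) := by
    by_contra hcon
    push_neg at hcon
    have huniv : (Finset.univ : Finset (Fin 5)) ⊆ {a, b, c, d} := fun z _ => hcon z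
    have h5 : (5 : ℕ) ≤ ({a, b, c, d} : Finset (Fin 5)).card := by
      have := Finset.card_le_card huniv
      simpa using this
    have h4 : ({a, b, c, d} : Finset (Fin 5)).card ≤ 4 := by
      apply le_trans (Finset.card_insert_le _ _)
      apply Nat.succ_le_succ
      apply le_trans (Finset.card_insert_le _ _)
      apply Nat.succ_le_succ
      apply le_trans (Finset.card_insert_le _ _)
      apply Nat.succ_le_succ
      simp
    omega
  have hta : a ≠ t := fun h => ht (h ▸ by simp)
  have htb : b ≠ t := fun h => ht (h ▸ by simp)
  have htc : c ≠ t := fun h => ht (h ▸ by simp)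
  have htd : d ≠ t := fun h => ht (h ▸ by simp)
  set σ := mkPerm a b c d t (vfun_inj n1 n2 n3 hta n4 n5 htb n6 htc htd) with hσdef
  have hσ0 : σ 0 = a := rfl
  have hσ1 : σ 1 = b := rfl
  have hσ2 : σ 2 = c := rfl
  have hσ3 : σ 3 = d := rfl
  have hS : ({a, b, c, d} : Finset (Fin 5)) = ({0, 1, 2, 3} : Finset (Fin 5)).image σ := by
    rw [show ({0,1,2,3} : Finset (Fin 5)) = insert 0 (insert 1 (insert 2 ({3} : Finset (Fin 5)))) from rfl]
    simp [Finset.image_insert, hσ0, hσ1, hσ2, hσ3]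
  have hseteq : E.filter (· ⊆ ({a, b, c, d} : Finset (Fin 5))) =
      std2K2.image (fun Y => Y.image σ) := by
    ext X
    rw [mem_image_perm, Finset.mem_filter]
    unfold std2K2
    rw [Finset.mem_filter]
    constructor
    · rintro ⟨hXE, hXS⟩
      refine ⟨Finset.mem_univ _, image_symm_subset hS hXS, ?_, ?_⟩
      · rw [pair_subset_image_symm, hσ0, hσ1]
        exact ((hchar X hXS).1 hXE).1
      · rw [pair_subset_image_symm, hσ2, hσ3]
        exact ((hchar X hXS).1 hXE).2
    · rintro ⟨-, hsub, hn1, hn2⟩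
      rw [pair_subset_image_symm, hσ0, hσ1] at hn1
      rw [pair_subset_image_symm, hσ2, hσ3] at hn2
      have hXS : X ⊆ ({a, b, c, d} : Finset (Fin 5)) := subset_of_image_symm hS hsub
      exact ⟨(hchar X hXS).2 ⟨hn1, hn2⟩, hXS⟩
  rw [hseteq, sum_image_perm, std2K2_sum]

lemma sumC5 (E : Finset (Finset (Fin 5))) (a b c d t : Fin 5)
    (n1 : a ≠ b) (n2 : a ≠ c) (n3 : a ≠ d) (n4 : a ≠ t) (n5 : b ≠ c) (n6 : b ≠ d) (n7 : b ≠ t)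
    (n8 : c ≠ d) (n9 : c ≠ t) (n10 : d ≠ t)
    (hchar : ∀ X : Finset (Fin 5), X ∈ E ↔ ¬(({a, b} : Finset (Fin 5)) ⊆ X) ∧
      ¬(({b, c} : Finset (Fin 5)) ⊆ X) ∧ ¬(({c, d} : Finset (Fin 5)) ⊆ X) ∧
      ¬(({d, t} : Finset (Fin 5)) ⊆ X) ∧ ¬(({t, a} : Finset (Fin 5)) ⊆ X)) :
    ∑ X ∈ E, (-1 : ℤ) ^ X.card = 1 := by
  set σ := mkPerm a b c d t (vfun_inj n1 n2 n3 n4 n5 n6 n7 n8 n9 n10) with hσdef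
  have hσ0 : σ 0 = a := rfl
  have hσ1 : σ 1 = b := rfl
  have hσ2 : σ 2 = c := rfl
  have hσ3 : σ 3 = d := rfl
  have hσ4 : σ 4 = t := rfl
  have hseteq : E = stdC5.image (fun Y => Y.image σ) := by
    ext X
    rw [mem_image_perm]
    unfold stdC5
    rw [Finset.mem_filter]
    rw [hchar X]
    rw [pair_subset_image_symm (u := 0) (v := 1), hσ0, hσ1]
    rw [pair_subset_image_symm (u := 1) (v := 2), hσ1, hσ2]
    rw [pair_subset_image_symm (u := 2) (v := 3), hσ2, hσ3]
    rw [pair_subset_image_symm (u := 3) (v := 4), hσ3, hσ4]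
    rw [pair_subset_image_symm (u := 4) (v := 0), hσ4, hσ0]
    simp only [Finset.mem_univ, true_and]
  rw [hseteq, sum_image_perm, stdC5_sum]

end TransportSums
section Crux

variable {G : Finset (Fin 5)} {E : Finset (Finset (Fin 5))}

lemma final2K2
    (hdown : ∀ B ∈ E, ∀ A, A ⊆ B → A ∈ E)
    (hEsum : ∀ S : Finset (Fin 5), S ⊆ G → S ≠ ∅ →
      ∑ X ∈ E.filter (· ⊆ S), (-1 : ℤ) ^ X.card ≤ 0)
    (hindep : ∀ X, X ⊆ G → (∀ e, e ⊆ X → e.card = 2 → e ∈ E) → X ∈ E)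
    (a b c d : Fin 5) (haG : a ∈ G) (hbG : b ∈ G) (hcG : c ∈ G) (hdG : d ∈ G)
    (n1 : a ≠ b) (n2 : a ≠ c) (n3 : a ≠ d) (n4 : b ≠ c) (n5 : b ≠ d) (n6 : c ≠ d)
    (eab : ({a, b} : Finset (Fin 5)) ∉ E) (ecd : ({c, d} : Finset (Fin 5)) ∉ E)
    (iac : ({a, c} : Finset (Fin 5)) ∈ E) (iad : ({a, d} : Finset (Fin 5)) ∈ E)
    (ibc : ({b, c} : Finset (Fin 5)) ∈ E) (ibd : ({b, d} : Finset (Fin 5)) ∈ E) : False := by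
  have hSG : ({a, b, c, d} : Finset (Fin 5)) ⊆ G := by
    intro z hz
    simp only [Finset.mem_insert, Finset.mem_singleton] at hz
    rcases hz with rfl | rfl | rfl | rfl <;> assumption
  have hchar : ∀ X : Finset (Fin 5), X ⊆ ({a, b, c, d} : Finset (Fin 5)) →
      (X ∈ E ↔ ¬(({a, b} : Finset (Fin 5)) ⊆ X) ∧ ¬(({c, d} : Finset (Fin 5)) ⊆ X)) := by
    intro X hXS
    constructor
    · intro hXE
      exact ⟨fun h => eab (hdown X hXE _ h), fun h => ecd (hdown X hXE _ h)⟩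
    · rintro ⟨hn1, hn2⟩
      refine hindep X (hXS.trans hSG) ?_
      intro e he hecard
      obtain ⟨x, y, hxy, rfl⟩ := Finset.card_eq_two.1 hecard
      have hx : x ∈ ({a, b, c, d} : Finset (Fin 5)) := hXS (he (by simp))
      have hy : y ∈ ({a, b, c, d} : Finset (Fin 5)) := hXS (he (by simp))
      simp only [Finset.mem_insert, Finset.mem_singleton] at hx hy
      rcases hx with rfl | rfl | rfl | rfl <;> rcases hy with rfl | rfl | rfl | rfl
      · exact absurd rfl hxy
      · exact absurd he hn1
      · exact iac
      · exact iad
      · rw [Finset.pair_comm] at he; exact absurd he hn1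
      · exact absurd rfl hxy
      · exact ibc
      · exact ibd
      · rwa [Finset.pair_comm]
      · rwa [Finset.pair_comm]
      · exact absurd rfl hxy
      · exact absurd he hn2
      · rwa [Finset.pair_comm]
      · rwa [Finset.pair_comm]
      · rw [Finset.pair_comm] at he; exact absurd he hn2
      · exact absurd rfl hxy
  have h1 := sum2K2 E a b c d n1 n2 n3 n4 n5 n6 hchar
  have h2 := hEsum _ hSG (by
    intro h
    have : a ∈ ({a, b, c, d} : Finset (Fin 5)) := by simp
    rw [h] at this
    exact Finset.notMem_empty a this)
  omega

lemma finalC5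
    (hdown : ∀ B ∈ E, ∀ A, A ⊆ B → A ∈ E)
    (hEsum : ∀ S : Finset (Fin 5), S ⊆ G → S ≠ ∅ →
      ∑ X ∈ E.filter (· ⊆ S), (-1 : ℤ) ^ X.card ≤ 0)
    (hindep : ∀ X, X ⊆ G → (∀ e, e ⊆ X → e.card = 2 → e ∈ E) → X ∈ E)
    (a b c d t : Fin 5) (haG : a ∈ G) (hbG : b ∈ G) (hcG : c ∈ G) (hdG : d ∈ G) (htG : t ∈ G)
    (n1 : a ≠ b) (n2 : a ≠ c) (n3 : a ≠ d) (n4 : a ≠ t) (n5 : b ≠ c) (n6 : b ≠ d) (n7 : b ≠ t)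
    (n8 : c ≠ d) (n9 : c ≠ t) (n10 : d ≠ t)
    (eab : ({a, b} : Finset (Fin 5)) ∉ E) (ebc : ({b, c} : Finset (Fin 5)) ∉ E)
    (ecd : ({c, d} : Finset (Fin 5)) ∉ E) (edt : ({d, t} : Finset (Fin 5)) ∉ E)
    (eta : ({t, a} : Finset (Fin 5)) ∉ E)
    (iac : ({a, c} : Finset (Fin 5)) ∈ E) (iad : ({a, d} : Finset (Fin 5)) ∈ E)
    (ibd : ({b, d} : Finset (Fin 5)) ∈ E) (ibt : ({b, t} : Finset (Fin 5)) ∈ E)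
    (ict : ({c, t} : Finset (Fin 5)) ∈ E) : False := by
  have hcard : ({a, b, c, d, t} : Finset (Fin 5)).card = 5 := by
    rw [Finset.card_insert_of_notMem (by simp [n1, n2, n3, n4]),
      Finset.card_insert_of_notMem (by simp [n5, n6, n7]),
      Finset.card_insert_of_notMem (by simp [n8, n9]),
      Finset.card_insert_of_notMem (by simp [n10]), Finset.card_singleton]
  have huniv : ({a, b, c, d, t} : Finset (Fin 5)) = Finset.univ :=
    Finset.eq_univ_of_card _ (by rw [hcard]; rfl)
  have hGuniv : G = Finset.univ := by
    apply Finset.univ_subset_iff.1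
    rw [← huniv]
    intro z hz
    simp only [Finset.mem_insert, Finset.mem_singleton] at hz
    rcases hz with rfl | rfl | rfl | rfl | rfl <;> assumption
  have hchar : ∀ X : Finset (Fin 5), X ∈ E ↔ ¬(({a, b} : Finset (Fin 5)) ⊆ X) ∧
      ¬(({b, c} : Finset (Fin 5)) ⊆ X) ∧ ¬(({c, d} : Finset (Fin 5)) ⊆ X) ∧
      ¬(({d, t} : Finset (Fin 5)) ⊆ X) ∧ ¬(({t, a} : Finset (Fin 5)) ⊆ X) := by
    intro X
    constructor
    · intro hXE
      exact ⟨fun h => eab (hdown X hXE _ h), fun h => ebc (hdown X hXE _ h),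
        fun h => ecd (hdown X hXE _ h), fun h => edt (hdown X hXE _ h),
        fun h => eta (hdown X hXE _ h)⟩
    · rintro ⟨hn1, hn2, hn3, hn4, hn5⟩
      refine hindep X (by rw [hGuniv]; exact Finset.subset_univ X) ?_
      intro e he hecard
      obtain ⟨x, y, hxy, rfl⟩ := Finset.card_eq_two.1 hecard
      have hx : x ∈ ({a, b, c, d, t} : Finset (Fin 5)) := huniv ▸ Finset.mem_univ x
      have hy : y ∈ ({a, b, c, d, t} : Finset (Fin 5)) := huniv ▸ Finset.mem_univ y
      simp only [Finset.mem_insert, Finset.mem_singleton] at hx hy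
      rcases hx with rfl | rfl | rfl | rfl | rfl <;> rcases hy with rfl | rfl | rfl | rfl | rfl
      · exact absurd rfl hxy
      · exact absurd he hn1
      · exact iac
      · exact iad
      · rw [Finset.pair_comm] at he; exact absurd he hn5
      · rw [Finset.pair_comm] at he; exact absurd he hn1
      · exact absurd rfl hxy
      · exact absurd he hn2
      · exact ibd
      · exact ibt
      · rwa [Finset.pair_comm]
      · rw [Finset.pair_comm] at he; exact absurd he hn2
      · exact absurd rfl hxy
      · exact absurd he hn3
      · exact ict
      · rwa [Finset.pair_comm]
      · rwa [Finset.pair_comm]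
      · rw [Finset.pair_comm] at he; exact absurd he hn3
      · exact absurd rfl hxy
      · exact absurd he hn4
      · exact absurd he hn5
      · rwa [Finset.pair_comm]
      · rwa [Finset.pair_comm]
      · rw [Finset.pair_comm] at he; exact absurd he hn4
      · exact absurd rfl hxy
  have h1 := sumC5 E a b c d t n1 n2 n3 n4 n5 n6 n7 n8 n9 n10 hchar
  have h2 := hEsum Finset.univ (by rw [hGuniv]) Finset.univ_nonempty.ne_empty
  rw [Finset.filter_true_of_mem (fun X _ => Finset.subset_univ X)] at h2
  omega

end Crux
section Crux2

variable {G : Finset (Fin 5)} {E : Finset (Finset (Fin 5))}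

lemma five_distinct_univ {a b c d t : Fin 5} (n1 : a ≠ b) (n2 : a ≠ c) (n3 : a ≠ d) (n4 : a ≠ t)
    (n5 : b ≠ c) (n6 : b ≠ d) (n7 : b ≠ t) (n8 : c ≠ d) (n9 : c ≠ t) (n10 : d ≠ t) :
    ({a, b, c, d, t} : Finset (Fin 5)) = Finset.univ := by
  apply Finset.eq_univ_of_card
  rw [Finset.card_insert_of_notMem (by simp [n1, n2, n3, n4]),
    Finset.card_insert_of_notMem (by simp [n5, n6, n7]),
    Finset.card_insert_of_notMem (by simp [n8, n9]),
    Finset.card_insert_of_notMem (by simp [n10]), Finset.card_singleton]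
  rfl

lemma afterDT
    (hdown : ∀ B ∈ E, ∀ A, A ⊆ B → A ∈ E)
    (hEsum : ∀ S : Finset (Fin 5), S ⊆ G → S ≠ ∅ →
      ∑ X ∈ E.filter (· ⊆ S), (-1 : ℤ) ^ X.card ≤ 0)
    (hindep : ∀ X, X ⊆ G → (∀ e, e ⊆ X → e.card = 2 → e ∈ E) → X ∈ E)
    (hedgeu : ∀ i ∈ G, ∃ x y : Fin 5, x ≠ y ∧ ({x, y} : Finset (Fin 5)) ∉ E ∧ x ∈ G ∧ y ∈ G ∧
      x ≠ i ∧ y ≠ i ∧ ({i, x} : Finset (Fin 5)) ∈ E ∧ ({i, y} : Finset (Fin 5)) ∈ E)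
    (a b c d t : Fin 5) (haG : a ∈ G) (hbG : b ∈ G) (hcG : c ∈ G) (hdG : d ∈ G) (htG : t ∈ G)
    (n1 : a ≠ b) (n2 : a ≠ c) (n3 : a ≠ d) (n4 : a ≠ t) (n5 : b ≠ c) (n6 : b ≠ d) (n7 : b ≠ t)
    (n8 : c ≠ d) (n9 : c ≠ t) (n10 : d ≠ t)
    (eab : ({a, b} : Finset (Fin 5)) ∉ E) (ebc : ({b, c} : Finset (Fin 5)) ∉ E)
    (ecd : ({c, d} : Finset (Fin 5)) ∉ E) (edt : ({d, t} : Finset (Fin 5)) ∉ E)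
    (iac : ({a, c} : Finset (Fin 5)) ∈ E) (iad : ({a, d} : Finset (Fin 5)) ∈ E)
    (ibd : ({b, d} : Finset (Fin 5)) ∈ E) (ibt : ({b, t} : Finset (Fin 5)) ∈ E) : False := by
  by_cases hat : ({a, t} : Finset (Fin 5)) ∈ E
  · exact final2K2 hdown hEsum hindep a b d t haG hbG hdG htG n1 n3 n4 n6 n7 n10
      eab edt iad hat ibd ibt
  · by_cases hct : ({c, t} : Finset (Fin 5)) ∈ E
    · refine finalC5 hdown hEsum hindep a b c d t haG hbG hcG hdG htG
        n1 n2 n3 n4 n5 n6 n7 n8 n9 n10 eab ebc ecd edt ?_ iac iad ibd ibt hct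
      rw [Finset.pair_comm]
      exact hat
    · obtain ⟨x, y, hxy, hxyE, hxG, hyG, hxc, hyc, icx, icy⟩ := hedgeu c hcG
      have hxb : x ≠ b := fun h => ebc (by rw [h] at icx; rwa [Finset.pair_comm] at icx)
      have hyb : y ≠ b := fun h => ebc (by rw [h] at icy; rwa [Finset.pair_comm] at icy)
      have hxd : x ≠ d := fun h => ecd (by rwa [h] at icx)
      have hyd : y ≠ d := fun h => ecd (by rwa [h] at icy)
      have hxt : x ≠ t := fun h => hct (by rwa [h] at icx)
      have hyt : y ≠ t := fun h => hct (by rwa [h] at icy)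
      have huniv := five_distinct_univ n1 n2 n3 n4 n5 n6 n7 n8 n9 n10
      have hx : x ∈ ({a, b, c, d, t} : Finset (Fin 5)) := by rw [huniv]; exact Finset.mem_univ x
      have hy : y ∈ ({a, b, c, d, t} : Finset (Fin 5)) := by rw [huniv]; exact Finset.mem_univ y
      simp only [Finset.mem_insert, Finset.mem_singleton] at hx hy
      have hxa : x = a := by
        rcases hx with h | h | h | h | h
        · exact h
        · exact absurd h hxb
        · exact absurd h hxc
        · exact absurd h hxd
        · exact absurd h hxt
      have hya : y = a := by
        rcases hy with h | h | h | h | h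
        · exact h
        · exact absurd h hyb
        · exact absurd h hyc
        · exact absurd h hyd
        · exact absurd h hyt
      exact hxy (hxa.trans hya.symm)

lemma afterBC
    (hdown : ∀ B ∈ E, ∀ A, A ⊆ B → A ∈ E)
    (hEsum : ∀ S : Finset (Fin 5), S ⊆ G → S ≠ ∅ →
      ∑ X ∈ E.filter (· ⊆ S), (-1 : ℤ) ^ X.card ≤ 0)
    (hindep : ∀ X, X ⊆ G → (∀ e, e ⊆ X → e.card = 2 → e ∈ E) → X ∈ E)
    (hedgeu : ∀ i ∈ G, ∃ x y : Fin 5, x ≠ y ∧ ({x, y} : Finset (Fin 5)) ∉ E ∧ x ∈ G ∧ y ∈ G ∧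
      x ≠ i ∧ y ≠ i ∧ ({i, x} : Finset (Fin 5)) ∈ E ∧ ({i, y} : Finset (Fin 5)) ∈ E)
    (a b c d : Fin 5) (haG : a ∈ G) (hbG : b ∈ G) (hcG : c ∈ G) (hdG : d ∈ G)
    (n1 : a ≠ b) (n2 : a ≠ c) (n3 : a ≠ d) (n4 : b ≠ c) (n5 : b ≠ d) (n6 : c ≠ d)
    (eab : ({a, b} : Finset (Fin 5)) ∉ E) (ecd : ({c, d} : Finset (Fin 5)) ∉ E)
    (ebc : ({b, c} : Finset (Fin 5)) ∉ E)
    (iac : ({a, c} : Finset (Fin 5)) ∈ E) (iad : ({a, d} : Finset (Fin 5)) ∈ E) : False := by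
  obtain ⟨x, y, hxy, hxyE, hxG, hyG, hxb, hyb, ibx, iby⟩ := hedgeu b hbG
  have hxa : x ≠ a := fun h => eab (by rw [h] at ibx; rwa [Finset.pair_comm] at ibx)
  have hya : y ≠ a := fun h => eab (by rw [h] at iby; rwa [Finset.pair_comm] at iby)
  have hxc : x ≠ c := fun h => ebc (by rwa [h] at ibx)
  have hyc : y ≠ c := fun h => ebc (by rwa [h] at iby)
  have huniv := five_distinct_univ n1 n2 hxa.symm hya.symm n4 hxb.symm hyb.symm
    hxc.symm hyc.symm hxy
  have hd : d ∈ ({a, b, c, x, y} : Finset (Fin 5)) := by rw [huniv]; exact Finset.mem_univ d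
  simp only [Finset.mem_insert, Finset.mem_singleton] at hd
  rcases hd with h | h | h | h | h
  · exact n3 h.symm
  · exact n5 h.symm
  · exact n6 h.symm
  · subst h
    exact afterDT hdown hEsum hindep hedgeu a b c d y haG hbG hcG hdG hyG
      n1 n2 n3 hya.symm n4 n5 hyb.symm n6 hyc.symm hxy
      eab ebc ecd hxyE iac iad ibx iby
  · subst h
    exact afterDT hdown hEsum hindep hedgeu a b c d x haG hbG hcG hdG hxG
      n1 n2 n3 hxa.symm n4 n5 hxb.symm n6 hxc.symm (Ne.symm hxy)
      eab ebc ecd (by rwa [Finset.pair_comm]) iac iad iby ibx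

lemma crux2 (G : Finset (Fin 5)) (E : Finset (Finset (Fin 5)))
    (hdown : ∀ B ∈ E, ∀ A, A ⊆ B → A ∈ E)
    (hsubG : E ⊆ G.powerset)
    (h0 : (∅ : Finset (Fin 5)) ∈ E)
    (hG : G ∉ E)
    (hsing : ∀ c ∈ G, ({c} : Finset (Fin 5)) ∈ E)
    (P : IntervalPartition 5 (G.powerset \ E))
    (hP2 : ∀ p ∈ P.pairs, p.1.card ≤ 2)
    (hu : ∀ i ∈ G, (E.filter fun X => i ∈ X).sup id ∉ E) : False := by
  have hbot : ∀ p ∈ P.pairs, p.1 ∈ G.powerset \ E ∧ p.1.card = 2 := by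
    intro p hp
    have hmem : p.1 ∈ G.powerset \ E :=
      P.sub p hp (mem_IccF (Finset.Subset.refl p.1) (P.le p hp))
    refine ⟨hmem, ?_⟩
    obtain ⟨hpG, hpE⟩ := Finset.mem_sdiff.1 hmem
    have hle := hP2 p hp
    interval_cases hc : p.1.card
    · exfalso
      apply hpE
      rw [Finset.card_eq_zero.1 hc]
      exact h0
    · exfalso
      obtain ⟨x, hx⟩ := Finset.card_eq_one.1 hc
      apply hpE
      rw [hx]
      refine hsing x ?_
      have hsubp : p.1 ⊆ G := Finset.mem_powerset.1 hpG
      exact hsubp (by rw [hx]; simp)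
    · rfl
  have hedge : ∀ X ∈ G.powerset \ E, ∃ e, e ⊆ X ∧ e.card = 2 ∧ e ∉ E := by
    intro X hX
    obtain ⟨p, hp, hXp⟩ := P.covers X hX
    obtain ⟨hmem, hcard⟩ := hbot p hp
    exact ⟨p.1, (mem_IccF' hXp).1, hcard, (Finset.mem_sdiff.1 hmem).2⟩
  have hindep : ∀ X, X ⊆ G → (∀ e, e ⊆ X → e.card = 2 → e ∈ E) → X ∈ E := by
    intro X hXG hall
    by_contra hXE
    obtain ⟨e, he1, he2, he3⟩ := hedge X (Finset.mem_sdiff.2 ⟨Finset.mem_powerset.2 hXG, hXE⟩)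
    exact he3 (hall e he1 he2)
  have hchi : ∀ S : Finset (Fin 5),
      0 ≤ ∑ X ∈ (G.powerset \ E).filter (· ⊆ S), (-1 : ℤ) ^ X.card := by
    intro S
    apply chi_nonneg (restrictIP P S)
    intro p hp
    obtain ⟨q, hq, rfl⟩ := Finset.mem_image.1 hp
    exact (hbot q (Finset.mem_filter.1 hq).1).2
  have hEsum : ∀ S : Finset (Fin 5), S ⊆ G → S ≠ ∅ →
      ∑ X ∈ E.filter (· ⊆ S), (-1 : ℤ) ^ X.card ≤ 0 := by
    intro S hSG hSne
    have hsplit : (G.powerset \ E).filter (· ⊆ S) = S.powerset \ E.filter (· ⊆ S) := by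
      ext X
      simp only [Finset.mem_filter, Finset.mem_sdiff, Finset.mem_powerset]
      constructor
      · rintro ⟨⟨hXG, hXE⟩, hXS⟩
        exact ⟨hXS, fun h => hXE h.1⟩
      · rintro ⟨hXS, hn⟩
        exact ⟨⟨hXS.trans hSG, fun hXE => hn ⟨hXE, hXS⟩⟩, hXS⟩
    have h1 := hchi S
    rw [hsplit, Finset.sum_sdiff_eq_sub (by
      intro X hX
      exact Finset.mem_powerset.2 (Finset.mem_filter.1 hX).2),
      Finset.sum_powerset_neg_one_pow_card, if_neg hSne] at h1
    omega
  have hedgeu : ∀ i ∈ G, ∃ x y : Fin 5, x ≠ y ∧ ({x, y} : Finset (Fin 5)) ∉ E ∧ x ∈ G ∧ y ∈ G ∧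
      x ≠ i ∧ y ≠ i ∧ ({i, x} : Finset (Fin 5)) ∈ E ∧ ({i, y} : Finset (Fin 5)) ∈ E := by
    intro i hi
    have huiG : (E.filter fun X => i ∈ X).sup id ⊆ G :=
      Finset.sup_le fun X hX => Finset.mem_powerset.1 (hsubG (Finset.mem_filter.1 hX).1)
    have hpair : ∀ z ∈ (E.filter fun X => i ∈ X).sup id, z ≠ i →
        ({i, z} : Finset (Fin 5)) ∈ E := by
      intro z hz _
      obtain ⟨X, hX, hzX⟩ := Finset.mem_sup.1 hz
      obtain ⟨hXE, hiX⟩ := Finset.mem_filter.1 hX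
      refine hdown X hXE _ ?_
      intro w hw
      simp only [Finset.mem_insert, Finset.mem_singleton] at hw
      rcases hw with rfl | rfl
      · exact hiX
      · exact hzX
    have huiF : (E.filter fun X => i ∈ X).sup id ∈ G.powerset \ E :=
      Finset.mem_sdiff.2 ⟨Finset.mem_powerset.2 huiG, hu i hi⟩
    obtain ⟨e, he_sub, he_card, heE⟩ := hedge _ huiF
    obtain ⟨x, y, hxy, rfl⟩ := Finset.card_eq_two.1 he_card
    have hxui : x ∈ (E.filter fun X => i ∈ X).sup id := he_sub (by simp)
    have hyui : y ∈ (E.filter fun X => i ∈ X).sup id := he_sub (by simp)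
    have hxi : x ≠ i := by
      rintro rfl
      exact heE (hpair y hyui (fun h => hxy h.symm))
    have hyi : y ≠ i := by
      rintro rfl
      have := hpair x hxui hxy
      rw [Finset.pair_comm] at this
      exact heE this
    exact ⟨x, y, hxy, heE, huiG hxui, huiG hyui, hxi, hyi,
      hpair x hxui hxi, hpair y hyui hyi⟩
  have hGne : G.Nonempty := by
    rw [Finset.nonempty_iff_ne_empty]
    intro h
    exact hG (h ▸ h0)
  obtain ⟨v, hv⟩ := hGne
  obtain ⟨a, b, hab, eab, haG, hbG, -, -, -, -⟩ := hedgeu v hv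
  obtain ⟨c, d, hcd, ecd, hcG, hdG, hca, hda, iac, iad⟩ := hedgeu a haG
  have hcb : c ≠ b := fun h => eab (by rwa [h] at iac)
  have hdb : d ≠ b := fun h => eab (by rwa [h] at iad)
  by_cases hbc : ({b, c} : Finset (Fin 5)) ∈ E
  · by_cases hbd : ({b, d} : Finset (Fin 5)) ∈ E
    · exact final2K2 hdown hEsum hindep a b c d haG hbG hcG hdG
        hab (Ne.symm hca) (Ne.symm hda) (Ne.symm hcb) (Ne.symm hdb) hcd
        eab ecd iac iad hbc hbd
    · exact afterBC hdown hEsum hindep hedgeu a b d c haG hbG hdG hcG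
        hab (Ne.symm hda) (Ne.symm hca) (Ne.symm hdb) (Ne.symm hcb) (Ne.symm hcd)
        eab (by rwa [Finset.pair_comm]) hbd iad iac
  · exact afterBC hdown hEsum hindep hedgeu a b c d haG hbG hcG hdG
      hab (Ne.symm hca) (Ne.symm hda) (Ne.symm hcb) (Ne.symm hdb) hcd
      eab ecd hbc iac iad

end Crux2
section TMain

theorem Tmain : ∀ n : ℕ, ∀ G : Finset (Fin 5), G.card = n → ∀ E : Finset (Finset (Fin 5)),
    (∀ B ∈ E, ∀ A, A ⊆ B → A ∈ E) → (∅ : Finset (Fin 5)) ∈ E → E ⊆ G.powerset →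
    (∃ P : IntervalPartition 5 (G.powerset \ E), ∀ p ∈ P.pairs, p.1.card ≤ 2) →
    (∃ P : IntervalPartition 5 E, ∀ p ∈ P.pairs, p.1.card ≤ 1) := by
  intro n
  induction n using Nat.strong_induction_on with
  | _ n IH =>
  rintro G hGcard E hdown h0 hsubG ⟨P, hP2⟩
  by_cases hGE : G ∈ E
  · have hEeq : E = G.powerset := by
      apply Finset.Subset.antisymm hsubG
      intro X hX
      exact hdown G hGE X (Finset.mem_powerset.1 hX)
    refine ⟨⟨{(∅, G)}, ?_, ?_, ?_, ?_⟩, ?_⟩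
    · intro p hp
      rw [Finset.mem_singleton] at hp
      subst hp
      exact Finset.empty_subset G
    · intro p hp
      rw [Finset.mem_singleton] at hp
      subst hp
      intro Z hZ
      rw [hEeq]
      exact Finset.mem_powerset.2 (mem_IccF' hZ).2
    · intro p hp q hq hne
      rw [Finset.mem_singleton] at hp hq
      exact absurd (hp.trans hq.symm) hne
    · intro C hC
      exact ⟨(∅, G), Finset.mem_singleton_self _,
        mem_IccF (Finset.empty_subset C) (Finset.mem_powerset.1 (hsubG hC))⟩
    · intro p hp
      rw [Finset.mem_singleton] at hp
      subst hp
      simp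
  · by_cases hc : ∃ c ∈ G, ({c} : Finset (Fin 5)) ∉ E
    · obtain ⟨c, hcG, hcE⟩ := hc
      have hEW : E ⊆ (G.erase c).powerset := by
        intro X hX
        refine Finset.mem_powerset.2 (fun z hz => Finset.mem_erase.2
          ⟨?_, Finset.mem_powerset.1 (hsubG hX) hz⟩)
        rintro rfl
        exact hcE (hdown X hX _ (Finset.singleton_subset_iff.2 hz))
      have hfilt : (G.powerset \ E).filter (· ⊆ G.erase c) = (G.erase c).powerset \ E := by
        ext X
        simp only [Finset.mem_filter, Finset.mem_sdiff, Finset.mem_powerset]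
        constructor
        · rintro ⟨⟨_, h2⟩, h3⟩
          exact ⟨h3, h2⟩
        · rintro ⟨h1, h2⟩
          exact ⟨⟨h1.trans (Finset.erase_subset c G), h2⟩, h1⟩
      have hlt : (G.erase c).card < n := hGcard ▸ Finset.card_erase_lt_of_mem hcG
      refine IH _ hlt (G.erase c) rfl E hdown h0 hEW
        ⟨castIP hfilt (restrictIP P (G.erase c)), ?_⟩
      intro p hp
      obtain ⟨q, hq, rfl⟩ := Finset.mem_image.1 hp
      exact hP2 q (Finset.mem_filter.1 hq).1
    · push_neg at hc
      by_cases hui : ∃ i ∈ G, (E.filter fun X => i ∈ X).sup id ∈ E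
      · obtain ⟨i, hiG, huiE⟩ := hui
        have hdown' : ∀ B ∈ E.filter (fun X => i ∉ X), ∀ A, A ⊆ B →
            A ∈ E.filter (fun X => i ∉ X) := by
          intro B hB A hAB
          obtain ⟨hBE, hiB⟩ := Finset.mem_filter.1 hB
          exact Finset.mem_filter.2 ⟨hdown B hBE A hAB, fun hiA => hiB (hAB hiA)⟩
        have h0' : ∅ ∈ E.filter (fun X => i ∉ X) := Finset.mem_filter.2 ⟨h0, by simp⟩
        have hsubG' : E.filter (fun X => i ∉ X) ⊆ (G.erase i).powerset := by
          intro X hX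
          obtain ⟨hXE, hiX⟩ := Finset.mem_filter.1 hX
          refine Finset.mem_powerset.2 (fun z hz => Finset.mem_erase.2
            ⟨?_, Finset.mem_powerset.1 (hsubG hXE) hz⟩)
          rintro rfl
          exact hiX hz
        have hfilt : (G.powerset \ E).filter (· ⊆ G.erase i) =
            (G.erase i).powerset \ E.filter (fun X => i ∉ X) := by
          ext X
          simp only [Finset.mem_filter, Finset.mem_sdiff, Finset.mem_powerset]
          constructor
          · rintro ⟨⟨_, h2⟩, h3⟩
            exact ⟨h3, fun hmem => h2 hmem.1⟩
          · rintro ⟨h1, h2⟩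
            refine ⟨⟨h1.trans (Finset.erase_subset i G), fun hXE => ?_⟩, h1⟩
            exact h2 ⟨hXE, fun hiX => (Finset.mem_erase.1 (h1 hiX)).1 rfl⟩
        have hlt : (G.erase i).card < n := hGcard ▸ Finset.card_erase_lt_of_mem hiG
        obtain ⟨P', hP1'⟩ := IH _ hlt (G.erase i) rfl (E.filter (fun X => i ∉ X))
          hdown' h0' hsubG' ⟨castIP hfilt (restrictIP P (G.erase i)), by
            intro p hp
            obtain ⟨q, hq, rfl⟩ := Finset.mem_image.1 hp
            exact hP2 q (Finset.mem_filter.1 hq).1⟩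
        refine ⟨⟨insert ({i}, (E.filter fun X => i ∈ X).sup id) P'.pairs, ?_, ?_, ?_, ?_⟩, ?_⟩
        · intro p hp
          rcases Finset.mem_insert.1 hp with rfl | hp'
          · refine Finset.singleton_subset_iff.2 (Finset.mem_sup.2
              ⟨{i}, Finset.mem_filter.2 ⟨hc i hiG, Finset.mem_singleton_self i⟩,
                Finset.mem_singleton_self i⟩)
          · exact P'.le p hp'
        · intro p hp
          rcases Finset.mem_insert.1 hp with rfl | hp'
          · intro Z hZ
            exact hdown _ huiE Z (mem_IccF' hZ).2
          · intro Z hZ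
            exact (Finset.mem_filter.1 (P'.sub p hp' hZ)).1
        · intro p hp q hq hne
          rw [Finset.disjoint_left]
          intro Z hZp hZq
          rcases Finset.mem_insert.1 hp with rfl | hp' <;> rcases Finset.mem_insert.1 hq with rfl | hq'
          · exact hne rfl
          · have hiZ : i ∈ Z := (mem_IccF' hZp).1 (Finset.mem_singleton_self i)
            exact (Finset.mem_filter.1 (P'.sub q hq' hZq)).2 hiZ
          · have hiZ : i ∈ Z := (mem_IccF' hZq).1 (Finset.mem_singleton_self i)
            exact (Finset.mem_filter.1 (P'.sub p hp' hZp)).2 hiZ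
          · have hd := P'.disj p hp' q hq' hne
            rw [Finset.disjoint_left] at hd
            exact hd hZp hZq
        · intro C hC
          by_cases hiC : i ∈ C
          · refine ⟨({i}, (E.filter fun X => i ∈ X).sup id), Finset.mem_insert_self _ _,
              mem_IccF (Finset.singleton_subset_iff.2 hiC) ?_⟩
            exact Finset.le_sup (f := id) (Finset.mem_filter.2 ⟨hC, hiC⟩)
          · obtain ⟨p, hp, hCp⟩ := P'.covers C (Finset.mem_filter.2 ⟨hC, hiC⟩)
            exact ⟨p, Finset.mem_insert_of_mem hp, hCp⟩
        · intro p hp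
          rcases Finset.mem_insert.1 hp with rfl | hp'
          · simp
          · exact hP1' p hp'
      · push_neg at hui
        exact absurd (crux2 G E hdown hsubG h0 hGE hc P hP2 hui) id

end TMain

/-- If `D ⊆ 2^[5]` is a down set with `∅ ∈ D` and nonempty complement
`U = 2^[5] \ D`, then `sdepth(U) > sdepth(D)`. -/
theorem sdepth_ideal_gt_quotient_five
    (D : Finset (Finset (Fin 5))) (hD : IsDownSet D) (h0 : ∅ ∈ D)
    (hU : ((Finset.univ : Finset (Finset (Fin 5))) \ D).Nonempty) :
    sdepth D < sdepth ((Finset.univ : Finset (Finset (Fin 5))) \ D) := by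
  set U := (Finset.univ : Finset (Finset (Fin 5))) \ D with hUdef
  have hUmem : ∀ X : Finset (Fin 5), X ∈ U ↔ X ∉ D := by
    intro X
    simp [hUdef, Finset.mem_sdiff]
  have hUnivD : (Finset.univ : Finset (Fin 5)) ∉ D := by
    intro h
    obtain ⟨X, hX⟩ := hU
    exact ((hUmem X).1 hX) (hD _ h X (Finset.subset_univ X))
  have hUup : ∀ X ∈ U, ∀ Y : Finset (Fin 5), X ⊆ Y → Y ∈ U := by
    intro X hX Y hXY
    rw [hUmem] at hX ⊢
    intro hYD
    exact hX (hD Y hYD X hXY)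
  have h0U : (∅ : Finset (Fin 5)) ∉ U := fun h => (hUmem ∅).1 h h0
  have hUnivU : (Finset.univ : Finset (Fin 5)) ∈ U := (hUmem _).2 hUnivD
  have hcard_top : ∀ P : IntervalPartition 5 D, ∀ p ∈ P.pairs, p.2.card ≤ 4 := by
    intro P p hp
    have hp2D : p.2 ∈ D := P.sub p hp (mem_IccF (P.le p hp) (Finset.Subset.refl p.2))
    have h5 : p.2.card ≤ 5 := by
      have := Finset.card_le_card (Finset.subset_univ p.2)
      simpa using this
    have hne : p.2.card ≠ 5 := by
      intro h
      have : p.2 = Finset.univ := Finset.eq_univ_of_card _ (by rw [h]; rfl)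
      exact hUnivD (this ▸ hp2D)
    omega
  by_cases H4 : ∃ P : IntervalPartition 5 D, ∀ p ∈ P.pairs, 4 ≤ p.2.card
  · obtain ⟨P, hP⟩ := H4
    have hsD : sdepth D ≤ 4 := by
      apply sdepth_le
      intro P'
      obtain ⟨p, hp, -⟩ := P'.covers ∅ h0
      exact ⟨p, hp, hcard_top P' p hp⟩
    have hsub : Finset.Icc (Finset.univ.filter
        (fun i : Fin 5 => ({i} : Finset (Fin 5))ᶜ ∈ D)) Finset.univ ⊆ U := by
      intro Z hZ
      obtain ⟨hZ1, -⟩ := mem_IccF' hZ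
      rw [hUmem]
      intro hZD
      obtain ⟨p, hp, hZp⟩ := P.covers Z hZD
      have hp2D : p.2 ∈ D := P.sub p hp (mem_IccF (P.le p hp) (Finset.Subset.refl p.2))
      have hc4 : p.2.card = 4 := le_antisymm (hcard_top P p hp) (hP p hp)
      have hcc : (p.2ᶜ).card = 1 := by
        rw [Finset.card_compl, Fintype.card_fin, hc4]
      obtain ⟨j, hj⟩ := Finset.card_eq_one.1 hcc
      have hp2eq : p.2 = ({j} : Finset (Fin 5))ᶜ := by
        rw [← hj, compl_compl]
      have hjS : j ∈ Finset.univ.filter (fun i : Fin 5 => ({i} : Finset (Fin 5))ᶜ ∈ D) :=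
        Finset.mem_filter.2 ⟨Finset.mem_univ j, hp2eq ▸ hp2D⟩
      have hjZ : j ∈ Z := hZ1 hjS
      have hjp2 : j ∈ p.2 := (mem_IccF' hZp).2 hjZ
      rw [hp2eq, Finset.mem_compl] at hjp2
      exact hjp2 (Finset.mem_singleton_self j)
    have hcov : ∀ C ∈ U, C ∈ Finset.Icc (Finset.univ.filter
        (fun i : Fin 5 => ({i} : Finset (Fin 5))ᶜ ∈ D)) Finset.univ := by
      intro C hC
      refine mem_IccF ?_ (Finset.subset_univ C)
      intro j hj
      obtain ⟨-, hjD⟩ := Finset.mem_filter.1 hj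
      by_contra hjC
      have hCsub : C ⊆ ({j} : Finset (Fin 5))ᶜ := by
        intro z hz
        rw [Finset.mem_compl, Finset.mem_singleton]
        rintro rfl
        exact hjC hz
      exact (hUmem C).1 hC (hD _ hjD C hCsub)
    have hsU : 5 ≤ sdepth U := by
      refine le_sdepth hU 5 ⟨{(Finset.univ.filter
        (fun i : Fin 5 => ({i} : Finset (Fin 5))ᶜ ∈ D), Finset.univ)}, ?_, ?_, ?_, ?_⟩ ?_
      · intro p hp
        rw [Finset.mem_singleton] at hp
        subst hp
        exact Finset.subset_univ _
      · intro p hp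
        rw [Finset.mem_singleton] at hp
        subst hp
        exact hsub
      · intro p hp q hq hne
        rw [Finset.mem_singleton] at hp hq
        exact absurd (hp.trans hq.symm) hne
      · intro C hC
        exact ⟨_, Finset.mem_singleton_self _, hcov C hC⟩
      · intro p hp
        rw [Finset.mem_singleton] at hp
        subst hp
        simp
    omega
  · by_cases H3 : ∃ P : IntervalPartition 5 D, ∀ p ∈ P.pairs, 3 ≤ p.2.card
    · have hsD : sdepth D ≤ 3 := by
        apply sdepth_le
        intro P'
        by_contra hcon
        push_neg at hcon
        exact H4 ⟨P', fun p hp => hcon p hp⟩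
      have hsU : 4 ≤ sdepth U := by
        obtain ⟨P3, hP3⟩ := H3
        have hFE : Finset.univ.powerset \ (U.image compl) = D.image compl := by
          ext X
          rw [Finset.mem_sdiff, mem_compl_image, mem_compl_image]
          constructor
          · rintro ⟨-, hX⟩
            by_contra hXD
            exact hX ((hUmem _).2 hXD)
          · intro hXD
            exact ⟨Finset.mem_powerset.2 (Finset.subset_univ X),
              fun h => (hUmem _).1 h hXD⟩
        have hEdown : ∀ B ∈ U.image compl, ∀ A, A ⊆ B → A ∈ U.image compl := by
          intro B hB A hAB
          rw [mem_compl_image] at hB ⊢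
          exact hUup _ hB _ (Finset.compl_subset_compl.2 hAB)
        have hE0 : (∅ : Finset (Fin 5)) ∈ U.image compl := by
          rw [mem_compl_image, Finset.compl_empty]
          exact hUnivU
        have hEsub : U.image compl ⊆ Finset.univ.powerset :=
          fun X _ => Finset.mem_powerset.2 (Finset.subset_univ X)
        have hFpart : ∃ P : IntervalPartition 5 (Finset.univ.powerset \ U.image compl),
            ∀ p ∈ P.pairs, p.1.card ≤ 2 := by
          refine ⟨castIP hFE.symm (complIP P3), ?_⟩
          intro p hp
          obtain ⟨q, hq, rfl⟩ := Finset.mem_image.1 hp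
          have := hP3 q hq
          have hle := hcard_top P3 q hq
          show (q.2ᶜ).card ≤ 2
          rw [Finset.card_compl, Fintype.card_fin]
          omega
        obtain ⟨P1, hP1⟩ := Tmain (Finset.univ : Finset (Fin 5)).card Finset.univ rfl
          (U.image compl) hEdown hE0 hEsub hFpart
        refine le_sdepth hU 4 (castIP (compl_image_image U) (complIP P1)) ?_
        intro p hp
        obtain ⟨q, hq, rfl⟩ := Finset.mem_image.1 hp
        have := hP1 q hq
        have hle : q.1.card ≤ 5 := by
          have := Finset.card_le_card (Finset.subset_univ q.1)
          simpa using this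
        show 4 ≤ (q.1ᶜ).card
        rw [Finset.card_compl, Fintype.card_fin]
        omega
      omega
    · have hsD : sdepth D ≤ 2 := by
        apply sdepth_le
        intro P'
        by_contra hcon
        push_neg at hcon
        exact H3 ⟨P', fun p hp => hcon p hp⟩
      have hsU : 3 ≤ sdepth U := by
        obtain ⟨PA, hPA⟩ := lemmaA U hUup h0U
        exact le_sdepth hU 3 PA hPA
      omega
end
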